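/- arXiv:1810.10454 — 4 statements merged into one kernel-verified Lean document; each statement's English description precedes it below -/
import Mathlib

section
/- Let T be an invertible ergodic measure-preserving transformation of a probability space (Ω, B, P), G a countable group, and f: Ω → G measurable. Define the cocycle F(n,ω) = f(ω)·f(Tω)···f(T^{n-1}ω) for n ≥ 1, and the range R_ω(n) = {F(k,ω) : 1 ≤ k ≤ n}. Then for P-almost every ω, |R_ω(n)|/n converges to P({ω' : F(n,ω') ≠ id_G for all n ≥ 1}). -/
open MeasureTheory Filter


section Birkhoff

variable {Ω : Type*} [MeasurableSpace Ω] {μ : MeasureTheory.Measure Ω} [IsProbabilityMeasure μ]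
  {T : Ω → Ω} {g : Ω → ℝ}

lemma bsum_nonneg (hg0 : ∀ x, 0 ≤ g x) (n : ℕ) (ω : Ω) :
    0 ≤ birkhoffSum T g n ω :=
  Finset.sum_nonneg fun _ _ => hg0 _

lemma bsum_le (hg1 : ∀ x, g x ≤ 1) (n : ℕ) (ω : Ω) :
    birkhoffSum T g n ω ≤ n := by
  calc birkhoffSum T g n ω ≤ ∑ _k ∈ Finset.range n, (1:ℝ) :=
        Finset.sum_le_sum fun k _ => hg1 _
    _ = n := by simp

lemma bavg_nonneg (hg0 : ∀ x, 0 ≤ g x) (n : ℕ) (ω : Ω) :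
    0 ≤ birkhoffAverage ℝ T g n ω := by
  have h := bsum_nonneg (T := T) hg0 n ω
  rw [birkhoffAverage, smul_eq_mul]
  positivity

lemma bavg_le_one (hg1 : ∀ x, g x ≤ 1) (n : ℕ) (ω : Ω) :
    birkhoffAverage ℝ T g n ω ≤ 1 := by
  rcases Nat.eq_zero_or_pos n with rfl | hn
  · simp [birkhoffAverage]
  · have h := bsum_le (T := T) hg1 n ω
    have hn' : (0:ℝ) < n := by exact_mod_cast hn
    rw [birkhoffAverage, smul_eq_mul, inv_mul_le_iff₀ hn', mul_one]
    exact h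

lemma bavg_measurable (hT : Measurable T) (hg : Measurable g) (n : ℕ) :
    Measurable (birkhoffAverage ℝ T g n) := by
  unfold birkhoffAverage birkhoffSum
  simp only [smul_eq_mul]
  exact (Finset.measurable_sum _ fun k _ => hg.comp (hT.iterate k)).const_mul _

lemma limsup_bavg_comp (hg0 : ∀ x, 0 ≤ g x) (hg1 : ∀ x, g x ≤ 1) (ω : Ω) :
    limsup (fun n => birkhoffAverage ℝ T g n (T ω)) atTop
      = limsup (fun n => birkhoffAverage ℝ T g n ω) atTop := by
  have hb : Bornology.IsBounded (Set.range g) := by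
    apply (Metric.isBounded_Icc (0:ℝ) 1).subset
    rintro _ ⟨x, rfl⟩
    exact ⟨hg0 x, hg1 x⟩
  have hd := tendsto_birkhoffAverage_apply_sub_birkhoffAverage' ℝ hb T ω
  set u := fun n => birkhoffAverage ℝ T g n (T ω) with hu
  set v := fun n => birkhoffAverage ℝ T g n ω with hv
  have hub : IsBoundedUnder (· ≤ ·) atTop u :=
    isBoundedUnder_of ⟨1, fun n => bavg_le_one hg1 _ _⟩
  have hub' : IsBoundedUnder (· ≥ ·) atTop u :=
    isBoundedUnder_of ⟨0, fun n => bavg_nonneg hg0 _ _⟩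
  have hvb : IsBoundedUnder (· ≤ ·) atTop v :=
    isBoundedUnder_of ⟨1, fun n => bavg_le_one hg1 _ _⟩
  have hvb' : IsBoundedUnder (· ≥ ·) atTop v :=
    isBoundedUnder_of ⟨0, fun n => bavg_nonneg hg0 _ _⟩
  apply le_antisymm
  · have heq : u = v + (u - v) := by ext n; simp
    calc limsup u atTop = limsup (v + (u - v)) atTop := by rw [← heq]
      _ ≤ limsup v atTop + limsup (u - v) atTop :=
          limsup_add_le hvb' hvb (hd.isBoundedUnder_ge.isCoboundedUnder_le) hd.isBoundedUnder_le
      _ = limsup v atTop := by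
          have hd2 : Tendsto (u - v) atTop (nhds 0) := hd
          rw [hd2.limsup_eq, add_zero]
  · have heq : v = u + (v - u) := by ext n; simp
    have hd' : Tendsto (v - u) atTop (nhds 0) := by
      have h2 := hd.neg
      simp only [neg_sub, neg_zero] at h2
      exact h2
    calc limsup v atTop = limsup (u + (v - u)) atTop := by rw [← heq]
      _ ≤ limsup u atTop + limsup (v - u) atTop :=
          limsup_add_le hub' hub (hd'.isBoundedUnder_ge.isCoboundedUnder_le) hd'.isBoundedUnder_le
      _ = limsup u atTop := by rw [hd'.limsup_eq, add_zero]

lemma exists_limsup_const (hT : Ergodic T μ) (hg : Measurable g)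
    (hg0 : ∀ x, 0 ≤ g x) (hg1 : ∀ x, g x ≤ 1) :
    ∃ c, (fun ω => limsup (fun n => birkhoffAverage ℝ T g n ω) atTop) =ᵐ[μ]
      fun _ => c := by
  have hm : Measurable fun ω => limsup (fun n => birkhoffAverage ℝ T g n ω) atTop :=
    Measurable.limsup fun n => bavg_measurable hT.toMeasurePreserving.measurable hg n
  obtain ⟨c, hc⟩ := hT.ae_eq_const_of_ae_eq_comp₀ hm.nullMeasurable
    (Eventually.of_forall fun ω => limsup_bavg_comp hg0 hg1 ω)
  exact ⟨c, hc⟩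

end Birkhoff

section Birkhoff2

variable {Ω : Type*} [MeasurableSpace Ω] {μ : MeasureTheory.Measure Ω} [IsProbabilityMeasure μ]
  {T : Ω → Ω} {g : Ω → ℝ}

lemma integrable_of_bounds (hg : Measurable g) (hg0 : ∀ x, 0 ≤ g x) (hg1 : ∀ x, g x ≤ 1) :
    Integrable g μ := by
  refine (integrable_const (1:ℝ)).mono' hg.aestronglyMeasurable ?_
  exact Eventually.of_forall fun x => by
    rw [Real.norm_eq_abs, abs_of_nonneg (hg0 x)]; exact hg1 x

lemma const_le_integral (hT : Ergodic T μ) (hg : Measurable g)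
    (hg0 : ∀ x, 0 ≤ g x) (hg1 : ∀ x, g x ≤ 1) {c : ℝ}
    (hc : (fun ω => limsup (fun n => birkhoffAverage ℝ T g n ω) atTop) =ᵐ[μ] fun _ => c) :
    c ≤ ∫ x, g x ∂μ := by
  have hTm : Measurable T := hT.toMeasurePreserving.measurable
  have hgint : Integrable g μ := integrable_of_bounds hg hg0 hg1
  have hintnn : 0 ≤ ∫ x, g x ∂μ := integral_nonneg hg0
  have hc1 : c ≤ 1 := by
    obtain ⟨ω, hω⟩ := hc.exists
    have hω' : limsup (fun n => birkhoffAverage ℝ T g n ω) atTop = c := hω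
    rw [← hω']
    have hbdd : IsBoundedUnder (· ≥ ·) atTop (fun n => birkhoffAverage ℝ T g n ω) :=
      isBoundedUnder_of ⟨0, fun n => bavg_nonneg hg0 n ω⟩
    apply limsup_le_of_le hbdd.isCoboundedUnder_le
    exact Eventually.of_forall fun n => bavg_le_one hg1 n ω
  have key : ∀ ε : ℝ, 0 < ε → c ≤ (∫ x, g x ∂μ) + ε := by
    intro ε hε
    set β := c - ε/2 with hβ
    clear_value β
    rcases le_or_gt β 0 with hβ0 | hβ0
    · linarith
    set D : ℕ → Set Ω :=
      fun N => {ω | ∀ n, 1 ≤ n → n ≤ N → birkhoffAverage ℝ T g n ω ≤ β} with hD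
    have hDmeas : ∀ N, MeasurableSet (D N) := by
      intro N
      have hiff : D N = ⋂ n, ⋂ (_ : 1 ≤ n), ⋂ (_ : n ≤ N),
          {ω | birkhoffAverage ℝ T g n ω ≤ β} := by
        ext ω; simp [hD]
      rw [hiff]
      exact MeasurableSet.iInter fun n => MeasurableSet.iInter fun _ =>
        MeasurableSet.iInter fun _ =>
          measurableSet_le (bavg_measurable hTm hg n) measurable_const
    have hanti : Antitone D := fun N M hNM ω hω n h1 h2 => hω n h1 (h2.trans hNM)
    have hnull : μ (⋂ N, D N) = 0 := by
      refine measure_mono_null ?_ (ae_iff.mp hc)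
      intro ω hω
      simp only [Set.mem_iInter] at hω
      simp only [Set.mem_setOf_eq]
      intro h
      have hle : limsup (fun n => birkhoffAverage ℝ T g n ω) atTop ≤ β := by
        have hbdd : IsBoundedUnder (· ≥ ·) atTop (fun n => birkhoffAverage ℝ T g n ω) :=
          isBoundedUnder_of ⟨0, fun n => bavg_nonneg hg0 n ω⟩
        apply limsup_le_of_le hbdd.isCoboundedUnder_le
        filter_upwards [eventually_ge_atTop 1] with n hn
        exact hω n n hn le_rfl
      rw [h] at hle
      linarith
    have htend : Tendsto (fun N => μ (D N)) atTop (nhds 0) := by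
      have h := tendsto_measure_iInter_atTop (fun N => (hDmeas N).nullMeasurableSet)
        hanti ⟨0, measure_ne_top μ _⟩
      rw [hnull] at h
      exact h
    have hev : ∀ᶠ N in atTop, μ (D N) < ENNReal.ofReal (ε/2) := by
      apply htend.eventually_lt_const
      exact ENNReal.ofReal_pos.mpr (by linarith)
    obtain ⟨N, hN⟩ := hev.exists
    have hDN : (μ (D N)).toReal < ε/2 := by
      rw [ENNReal.lt_ofReal_iff_toReal_lt (measure_ne_top μ _)] at hN
      exact hN
    set h : Ω → ℝ := fun ω => g ω + (D N).indicator (fun _ => (1:ℝ)) ω with hh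
    have hhmeas : Measurable h := hg.add (measurable_const.indicator (hDmeas N))
    have hind01 : ∀ x, 0 ≤ (D N).indicator (fun _ => (1:ℝ)) x ∧
        (D N).indicator (fun _ => (1:ℝ)) x ≤ 1 := by
      intro x
      by_cases hx : x ∈ D N <;>
        simp [Set.indicator_of_mem, Set.indicator_of_notMem, hx]
    have hh0 : ∀ x, 0 ≤ h x := fun x => add_nonneg (hg0 x) (hind01 x).1
    have hhint : Integrable h μ :=
      hgint.add ((integrable_const 1).indicator (hDmeas N))
    have hgh : ∀ x, g x ≤ h x := fun x => le_add_of_nonneg_right (hind01 x).1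
    obtain ⟨N', hN'1, hN'N⟩ : ∃ N', 1 ≤ N' ∧ N ≤ N' :=
      ⟨max N 1, le_max_right _ _, le_max_left _ _⟩
    have claim1 : ∀ ω, ∃ m, 1 ≤ m ∧ m ≤ N' ∧ (m:ℝ) * β ≤ birkhoffSum T h m ω := by
      intro ω
      by_cases hω : ω ∈ D N
      · refine ⟨1, le_rfl, hN'1, ?_⟩
        rw [birkhoffSum_one]
        simp only [hh]
        rw [Set.indicator_of_mem hω]
        have hβ1 : β ≤ 1 := by linarith
        push_cast
        nlinarith [hg0 ω]
      · simp only [hD, Set.mem_setOf_eq, not_forall] at hω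
        obtain ⟨n, h1, h2, h3⟩ := hω
        refine ⟨n, h1, le_trans h2 hN'N, ?_⟩
        have hn' : (0:ℝ) < n := by exact_mod_cast h1
        have h3' : β ≤ birkhoffAverage ℝ T g n ω := (not_le.mp h3).le
        have hS : (n:ℝ) * β ≤ birkhoffSum T g n ω := by
          rw [birkhoffAverage, smul_eq_mul] at h3'
          calc (n:ℝ) * β ≤ (n:ℝ) * ((n:ℝ)⁻¹ * birkhoffSum T g n ω) := by nlinarith
            _ = birkhoffSum T g n ω := by field_simp
        exact hS.trans (Finset.sum_le_sum fun k _ => hgh _)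
    have claim2 : ∀ (M : ℕ) (ω : Ω), ((M:ℝ) - (N':ℝ)) * β ≤ birkhoffSum T h M ω := by
      intro M
      induction M using Nat.strong_induction_on with
      | _ M ih =>
        intro ω
        by_cases hMN : M ≤ N'
        · have h1 : ((M:ℝ) - (N':ℝ)) ≤ 0 := by
            have : (M:ℝ) ≤ (N':ℝ) := by exact_mod_cast hMN
            linarith
          have h2 := bsum_nonneg (T := T) hh0 M ω
          nlinarith
        · push_neg at hMN
          obtain ⟨m, hm1, hmN, hms⟩ := claim1 ω
          have hmM : m ≤ M := hmN.trans hMN.le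
          have hsplit : birkhoffSum T h M ω
              = birkhoffSum T h m ω + birkhoffSum T h (M - m) (T^[m] ω) := by
            conv_lhs => rw [show M = m + (M - m) by omega]
            exact birkhoffSum_add T h m (M - m) ω
          have hih := ih (M - m) (by omega) (T^[m] ω)
          have hcast : ((M - m : ℕ) : ℝ) = (M:ℝ) - (m:ℝ) := by
            rw [Nat.cast_sub hmM]
          rw [hcast] at hih
          rw [hsplit]
          nlinarith
    have hint_comp : ∀ k : ℕ, Integrable (fun x => h (T^[k] x)) μ := by
      intro k
      have hk : MeasurePreserving (T^[k]) μ μ := (hT.toMeasurePreserving).iterate k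
      have h1 : AEStronglyMeasurable h (MeasureTheory.Measure.map (T^[k]) μ) := by
        rw [hk.map_eq]; exact hhmeas.aestronglyMeasurable
      have h2 : Integrable h (MeasureTheory.Measure.map (T^[k]) μ) := by
        rw [hk.map_eq]; exact hhint
      exact (integrable_map_measure h1 hk.measurable.aemeasurable).1 h2
    have hSint : ∀ M : ℕ, ∫ x, birkhoffSum T h M x ∂μ = M * ∫ x, h x ∂μ := by
      intro M
      have hcomp : ∀ k : ℕ, ∫ x, h (T^[k] x) ∂μ = ∫ x, h x ∂μ := by
        intro k
        have hk : MeasurePreserving (T^[k]) μ μ := (hT.toMeasurePreserving).iterate k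
        conv_rhs => rw [← hk.map_eq]
        rw [integral_map hk.measurable.aemeasurable]
        rw [hk.map_eq]
        exact hhmeas.aestronglyMeasurable
      unfold birkhoffSum
      rw [integral_finset_sum _ (fun k _ => hint_comp k)]
      simp [hcomp, Finset.sum_const, nsmul_eq_mul]
    have hβh : β ≤ ∫ x, h x ∂μ := by
      by_contra hcon
      push_neg at hcon
      set I := ∫ x, h x ∂μ with hI
      have hd : 0 < β - I := by linarith
      obtain ⟨M, hM⟩ := exists_nat_gt ((N':ℝ) * β / (β - I))
      have hM2 : (N':ℝ) * β < M * (β - I) := by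
        rw [div_lt_iff₀ hd] at hM
        linarith
      have hint_ineq : ((M:ℝ) - (N':ℝ)) * β ≤ M * I := by
        have h1 : ∫ _x, ((M:ℝ) - (N':ℝ)) * β ∂μ ≤ ∫ x, birkhoffSum T h M x ∂μ := by
          apply integral_mono (integrable_const _) ?_ (fun x => claim2 M x)
          exact integrable_finset_sum _ fun k _ => hint_comp k
        rw [integral_const, probReal_univ] at h1
        simp only [ENNReal.toReal_one, one_smul] at h1
        rw [hSint M] at h1
        exact h1
      nlinarith
    have hIeq : ∫ x, h x ∂μ = (∫ x, g x ∂μ) + (μ (D N)).toReal := by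
      have := integral_add hgint ((integrable_const (1:ℝ)).indicator (hDmeas N))
      rw [hh]
      rw [this]
      congr 1
      rw [integral_indicator_const (1:ℝ) (hDmeas N)]
      simp
      rfl
    rw [hIeq] at hβh
    linarith
  by_contra hcon
  push_neg at hcon
  have := key ((c - ∫ x, g x ∂μ)/2) (by linarith)
  linarith

end Birkhoff2

theorem birkhoff01 {Ω : Type*} [MeasurableSpace Ω] {μ : MeasureTheory.Measure Ω}
    [IsProbabilityMeasure μ] {T : Ω → Ω} {g : Ω → ℝ}
    (hT : Ergodic T μ) (hg : Measurable g)
    (hg0 : ∀ x, 0 ≤ g x) (hg1 : ∀ x, g x ≤ 1) :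
    ∀ᵐ ω ∂μ, Tendsto (fun n => birkhoffAverage ℝ T g n ω) atTop
      (nhds (∫ x, g x ∂μ)) := by
  obtain ⟨c, hc⟩ := exists_limsup_const hT hg hg0 hg1
  have hcle := const_le_integral hT hg hg0 hg1 hc
  set g' : Ω → ℝ := fun ω => 1 - g ω with hg'
  have hg'm : Measurable g' := measurable_const.sub hg
  have hg'0 : ∀ x, 0 ≤ g' x := fun x => by
    have := hg1 x; simp only [hg']; linarith
  have hg'1 : ∀ x, g' x ≤ 1 := fun x => by
    have := hg0 x; simp only [hg']; linarith
  obtain ⟨c', hc'⟩ := exists_limsup_const hT hg'm hg'0 hg'1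
  have hcle' := const_le_integral hT hg'm hg'0 hg'1 hc'
  have hint' : ∫ x, g' x ∂μ = 1 - ∫ x, g x ∂μ := by
    simp only [hg']
    rw [integral_sub (integrable_const 1) (integrable_of_bounds hg hg0 hg1)]
    simp
  have hpt : ∀ ω, limsup (fun n => birkhoffAverage ℝ T g' n ω) atTop
      = 1 - liminf (fun n => birkhoffAverage ℝ T g n ω) atTop := by
    intro ω
    have heq : ∀ᶠ n in atTop,
        birkhoffAverage ℝ T g' n ω = 1 - birkhoffAverage ℝ T g n ω := by
      filter_upwards [eventually_ge_atTop 1] with n hn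
      have hn' : (0:ℝ) < n := by exact_mod_cast hn
      have hsum : birkhoffSum T g' n ω = n - birkhoffSum T g n ω := by
        unfold birkhoffSum
        simp only [hg']
        rw [Finset.sum_sub_distrib]
        simp
      rw [birkhoffAverage, birkhoffAverage, smul_eq_mul, smul_eq_mul, hsum]
      field_simp
    rw [limsup_congr heq]
    have hbddle : IsBoundedUnder (· ≤ ·) atTop (fun n => birkhoffAverage ℝ T g n ω) :=
      isBoundedUnder_of ⟨1, fun n => bavg_le_one hg1 n ω⟩
    have hbddge : IsBoundedUnder (· ≥ ·) atTop (fun n => birkhoffAverage ℝ T g n ω) :=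
      isBoundedUnder_of ⟨0, fun n => bavg_nonneg hg0 n ω⟩
    exact limsup_const_sub atTop _ 1 hbddle.isCoboundedUnder_ge hbddge
  filter_upwards [hc, hc'] with ω h1 h2
  have h1' : limsup (fun n => birkhoffAverage ℝ T g n ω) atTop = c := h1
  have h2' : limsup (fun n => birkhoffAverage ℝ T g' n ω) atTop = c' := h2
  have hliminf : liminf (fun n => birkhoffAverage ℝ T g n ω) atTop = 1 - c' := by
    have h3 := hpt ω
    rw [h2'] at h3
    linarith
  have hbddle : IsBoundedUnder (· ≤ ·) atTop (fun n => birkhoffAverage ℝ T g n ω) :=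
    isBoundedUnder_of ⟨1, fun n => bavg_le_one hg1 n ω⟩
  have hbddge : IsBoundedUnder (· ≥ ·) atTop (fun n => birkhoffAverage ℝ T g n ω) :=
    isBoundedUnder_of ⟨0, fun n => bavg_nonneg hg0 n ω⟩
  have hle : liminf (fun n => birkhoffAverage ℝ T g n ω) atTop
      ≤ limsup (fun n => birkhoffAverage ℝ T g n ω) atTop :=
    liminf_le_limsup hbddle hbddge
  rw [h1', hliminf] at hle
  have hA : ∫ x, g x ∂μ ≤ 1 - c' := by
    rw [hint'] at hcle'
    linarith
  apply tendsto_of_liminf_eq_limsup ?_ ?_ hbddle hbddge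
  · rw [hliminf]; linarith
  · rw [h1']; linarith

lemma div_le_div_of_nonneg_right' {a b c : ℝ} (hab : a ≤ b) (hc : 0 ≤ c) :
    a / c ≤ b / c := by
  rcases eq_or_lt_of_le hc with h | h
  · simp [← h]
  · gcongr

/-- Spitzer-type range theorem for cocycles over ergodic transformations. -/
theorem range_of_cocycle_div_n_tendsto
    {Ω : Type*} [MeasurableSpace Ω] (μ : Measure Ω) [IsProbabilityMeasure μ]
    {G : Type*} [Group G] [Countable G] [DecidableEq G]
    [MeasurableSpace G] [MeasurableSingletonClass G]
    (T : Ω → Ω) (hTbij : Function.Bijective T) (hT : Ergodic T μ)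
    (f : Ω → G) (hf : Measurable f)
    (F : ℕ → Ω → G)
    (hF : ∀ n ω, F n ω = ((List.range n).map (fun i => f (T^[i] ω))).prod)
    (R : Ω → ℕ → Finset G)
    (hR : ∀ ω n, R ω n = (Finset.Icc 1 n).image (fun k => F k ω)) :
    ∀ᵐ ω ∂μ, Tendsto (fun n => ((R ω n).card : ℝ) / n) atTop
      (nhds (μ {ω' | ∀ n : ℕ, 1 ≤ n → F n ω' ≠ 1}).toReal) := by
  have hTm : Measurable T := hT.toMeasurePreserving.measurable
  -- measurability of the cocycle
  have hFmeas : ∀ n, Measurable (F n) := by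
    intro n
    have : F n = fun ω => ((List.range n).map (fun i => f (T^[i] ω))).prod :=
      funext (hF n)
    rw [this]
    clear this
    induction n with
    | zero => simpa [List.range_zero] using measurable_const
    | succ n ih =>
      have hrw : (fun ω => ((List.range (n+1)).map (fun i => f (T^[i] ω))).prod)
          = fun ω => ((List.range n).map (fun i => f (T^[i] ω))).prod * f (T^[n] ω) := by
        funext ω
        rw [List.range_succ, List.map_append, List.prod_append]
        simp
      rw [hrw]
      have hmul : Measurable (fun p : G × G => p.1 * p.2) := measurable_of_countable _
      exact hmul.comp (ih.prodMk (hf.comp (hTm.iterate n)))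
  -- cocycle identity
  have hco : ∀ (k i : ℕ) (ω : Ω), F (k + i) ω = F k ω * F i (T^[k] ω) := by
    intro k i ω
    rw [hF, hF, hF, List.range_add, List.map_append, List.prod_append]
    congr 1
    rw [List.map_map]
    refine congrArg List.prod (List.map_congr_left ?_)
    intro j _
    simp only [Function.comp_apply]
    rw [add_comm k j, Function.iterate_add_apply]
  -- freshness criterion
  have hfresh : ∀ (ω : Ω) (k j : ℕ), k < j →
      (F j ω ≠ F k ω ↔ F (j - k) (T^[k] ω) ≠ 1) := by
    intro ω k j hkj
    have hsplit : F j ω = F k ω * F (j - k) (T^[k] ω) := by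
      conv_lhs => rw [show j = k + (j - k) by omega]
      exact hco k (j - k) ω
    rw [hsplit]
    simp [mul_eq_left]
  -- sets
  set Ainf : Set Ω := {ω' | ∀ n : ℕ, 1 ≤ n → F n ω' ≠ 1} with hAinf
  set A : ℕ → Set Ω := fun m => {ω | ∀ i, 1 ≤ i → i ≤ m → F i ω ≠ 1} with hA
  have hAmeas : ∀ m, MeasurableSet (A m) := by
    intro m
    have : A m = ⋂ i, ⋂ (_ : 1 ≤ i), ⋂ (_ : i ≤ m), (F i ⁻¹' {1})ᶜ := by
      ext ω; simp [hA]
    rw [this]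
    exact MeasurableSet.iInter fun i => MeasurableSet.iInter fun _ =>
      MeasurableSet.iInter fun _ => ((hFmeas i) (measurableSet_singleton 1)).compl
  have hAinfmeas : MeasurableSet Ainf := by
    have : Ainf = ⋂ i, ⋂ (_ : 1 ≤ i), (F i ⁻¹' {1})ᶜ := by
      ext ω; simp [hAinf]
    rw [this]
    exact MeasurableSet.iInter fun i => MeasurableSet.iInter fun _ =>
      ((hFmeas i) (measurableSet_singleton 1)).compl
  have hAinter : Ainf = ⋂ m, A m := by
    ext ω
    constructor
    · intro h
      simp only [Set.mem_iInter]
      intro m i h1 _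
      exact h i h1
    · intro h i h1
      simp only [Set.mem_iInter] at h
      exact h i i h1 le_rfl
  have hanti : Antitone A := fun m m' hmm' ω hω i h1 h2 => hω i h1 (h2.trans hmm')
  -- indicator functions
  set g : ℕ → Ω → ℝ := fun m => (A m).indicator (fun _ => (1:ℝ)) with hg
  set ginf : Ω → ℝ := Ainf.indicator (fun _ => (1:ℝ)) with hginf
  have hind01 : ∀ (S : Set Ω) (x : Ω), 0 ≤ S.indicator (fun _ => (1:ℝ)) x ∧
      S.indicator (fun _ => (1:ℝ)) x ≤ 1 := by
    intro S x
    by_cases hx : x ∈ S <;> simp [Set.indicator_of_mem, Set.indicator_of_notMem, hx]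
  -- Birkhoff applications
  have hint_ind : ∀ (S : Set Ω), MeasurableSet S →
      ∫ x, S.indicator (fun _ => (1:ℝ)) x ∂μ = (μ S).toReal := by
    intro S hS
    rw [integral_indicator_const (1:ℝ) hS]
    simp
    rfl
  have habm : ∀ m, ∀ᵐ ω ∂μ, Tendsto (fun n => birkhoffAverage ℝ T (g m) n ω) atTop
      (nhds (μ (A m)).toReal) := by
    intro m
    have := birkhoff01 hT (measurable_const.indicator (hAmeas m))
      (fun x => (hind01 (A m) x).1) (fun x => (hind01 (A m) x).2)
    rwa [hint_ind (A m) (hAmeas m)] at this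
  have habinf : ∀ᵐ ω ∂μ, Tendsto (fun n => birkhoffAverage ℝ T ginf n ω) atTop
      (nhds (μ Ainf).toReal) := by
    have := birkhoff01 hT (measurable_const.indicator hAinfmeas)
      (fun x => (hind01 Ainf x).1) (fun x => (hind01 Ainf x).2)
    rwa [hint_ind Ainf hAinfmeas] at this
  have hae : ∀ᵐ ω ∂μ, (∀ m, Tendsto (fun n => birkhoffAverage ℝ T (g m) n ω) atTop
      (nhds (μ (A m)).toReal)) ∧ Tendsto (fun n => birkhoffAverage ℝ T ginf n ω) atTop
      (nhds (μ Ainf).toReal) := (ae_all_iff.2 habm).and habinf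
  have hae2 : ∀ᵐ ω ∂μ, (∀ m, Tendsto (fun n => birkhoffAverage ℝ T (g m) n (T ω)) atTop
      (nhds (μ (A m)).toReal)) ∧ Tendsto (fun n => birkhoffAverage ℝ T ginf n (T ω)) atTop
      (nhds (μ Ainf).toReal) :=
    hT.toMeasurePreserving.quasiMeasurePreserving.tendsto_ae.eventually hae
  -- measure continuity from above
  have hμconv : Tendsto (fun m => (μ (A m)).toReal) atTop (nhds (μ Ainf).toReal) := by
    have h1 := tendsto_measure_iInter_atTop (μ := μ)
      (fun m => (hAmeas m).nullMeasurableSet) hanti ⟨0, measure_ne_top μ _⟩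
    rw [← hAinter] at h1
    exact (ENNReal.tendsto_toReal (measure_ne_top μ _)).comp h1
  -- shift identity for Birkhoff sums
  have hshift : ∀ (gg : Ω → ℝ) (n : ℕ) (ω : Ω),
      birkhoffSum T gg n (T ω) = ∑ k ∈ Finset.Icc 1 n, gg (T^[k] ω) := by
    intro gg n ω
    unfold birkhoffSum
    rw [← Finset.Ico_add_one_right_eq_Icc, Finset.sum_Ico_eq_sum_range]
    simp only [Nat.add_sub_cancel]
    apply Finset.sum_congr rfl
    intro k _
    rw [add_comm 1 k, Function.iterate_succ_apply]
  -- cardinality of the range via last occurrences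
  have testdec : ∀ (ω : Ω) (n : ℕ), DecidablePred fun k => ∀ j ∈ Finset.Icc 1 n, k < j → F j ω ≠ F k ω := by
    intro ω n
    infer_instance
  have hcard : ∀ (ω : Ω) (n : ℕ),
      (R ω n).card = ((Finset.Icc 1 n).filter
        (fun k => ∀ j ∈ Finset.Icc 1 n, k < j → F j ω ≠ F k ω)).card := by
    intro ω n
    set L := (Finset.Icc 1 n).filter
      (fun k => ∀ j ∈ Finset.Icc 1 n, k < j → F j ω ≠ F k ω) with hL
    have hLmem : ∀ k, k ∈ L ↔ k ∈ Finset.Icc 1 n ∧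
        ∀ j ∈ Finset.Icc 1 n, k < j → F j ω ≠ F k ω := fun k => Finset.mem_filter
    have himg : (Finset.Icc 1 n).image (fun k => F k ω) = L.image (fun k => F k ω) := by
      apply Finset.Subset.antisymm
      · intro x hx
        simp only [Finset.mem_image] at hx ⊢
        obtain ⟨k, hk, rfl⟩ := hx
        set S := (Finset.Icc 1 n).filter (fun j => F j ω = F k ω) with hS
        have hSmem : ∀ j, j ∈ S ↔ j ∈ Finset.Icc 1 n ∧ F j ω = F k ω :=
          fun j => Finset.mem_filter
        have hSne : S.Nonempty := ⟨k, (hSmem k).mpr ⟨hk, rfl⟩⟩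
        have hmax := (hSmem _).mp (S.max'_mem hSne)
        refine ⟨S.max' hSne, (hLmem _).mpr ⟨hmax.1, ?_⟩, hmax.2⟩
        intro j hj hlt hEq
        have hjS : j ∈ S := (hSmem j).mpr ⟨hj, by rw [hEq, hmax.2]⟩
        exact absurd (S.le_max' j hjS) (not_le.mpr hlt)
      · exact Finset.image_subset_image (Finset.filter_subset _ _)
    have hinj : Set.InjOn (fun k => F k ω) L := by
      intro a ha b hb hEq
      have ha' := (hLmem a).mp (Finset.mem_coe.mp ha)
      have hb' := (hLmem b).mp (Finset.mem_coe.mp hb)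
      have hEq' : F a ω = F b ω := hEq
      by_contra hne
      rcases lt_or_gt_of_ne hne with h | h
      · exact ha'.2 b hb'.1 h hEq'.symm
      · exact hb'.2 a ha'.1 h hEq'
    rw [hR ω n, himg, Finset.card_image_of_injOn hinj]
  -- lower bound
  have key1 : ∀ (ω : Ω) (n : ℕ),
      birkhoffSum T ginf n (T ω) ≤ ((R ω n).card : ℝ) := by
    intro ω n
    rw [hshift, hcard ω n, Finset.card_filter]
    push_cast
    apply Finset.sum_le_sum
    intro k hk
    by_cases hmem : T^[k] ω ∈ Ainf
    · have hpred : ∀ j ∈ Finset.Icc 1 n, k < j → F j ω ≠ F k ω := by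
        intro j hj hlt
        rw [hfresh ω k j hlt]
        exact hmem (j - k) (by omega)
      have h1 : ginf (T^[k] ω) = 1 := by
        simp only [hginf]
        exact Set.indicator_of_mem hmem _
      rw [h1, if_pos hpred]
    · have h1 : ginf (T^[k] ω) = 0 := by
        simp only [hginf]
        exact Set.indicator_of_notMem hmem _
      rw [h1]
      split_ifs <;> norm_num
  -- upper bound
  have key2 : ∀ (m : ℕ) (ω : Ω) (n : ℕ),
      ((R ω n).card : ℝ) ≤ birkhoffSum T (g m) n (T ω) + m := by
    intro m ω n
    rw [hshift, hcard ω n, Finset.card_filter]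
    push_cast
    have hptwise : ∀ k ∈ Finset.Icc 1 n,
        (if ∀ j ∈ Finset.Icc 1 n, k < j → F j ω ≠ F k ω then (1:ℝ) else 0)
          ≤ (g m) (T^[k] ω) + (if n - m < k then (1:ℝ) else 0) := by
      intro k hk
      have hIccm := Finset.mem_Icc.mp hk
      have hg0k := (hind01 (A m) (T^[k] ω)).1
      by_cases hpred : ∀ j ∈ Finset.Icc 1 n, k < j → F j ω ≠ F k ω
      · rw [if_pos hpred]
        by_cases hkm : k + m ≤ n
        · have hmem : T^[k] ω ∈ A m := by
            intro i h1i him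
            have hlt : k < k + i := by omega
            have h2 := hpred (k + i) (Finset.mem_Icc.mpr ⟨by omega, by omega⟩) hlt
            rw [hfresh ω k (k + i) hlt] at h2
            have hki : k + i - k = i := by omega
            rwa [hki] at h2
          have h1 : (g m) (T^[k] ω) = 1 := by
            simp only [hg]
            exact Set.indicator_of_mem hmem _
          rw [h1]
          split_ifs <;> norm_num
        · rw [if_pos (by omega : n - m < k)]
          have h1 : 0 ≤ (g m) (T^[k] ω) := by
            simp only [hg]; exact hg0k
          linarith
      · rw [if_neg hpred]
        have h1 : 0 ≤ (g m) (T^[k] ω) := by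
          simp only [hg]; exact hg0k
        split_ifs <;> linarith
    calc (∑ k ∈ Finset.Icc 1 n,
        if ∀ j ∈ Finset.Icc 1 n, k < j → F j ω ≠ F k ω then (1:ℝ) else 0)
        ≤ ∑ k ∈ Finset.Icc 1 n, ((g m) (T^[k] ω) + (if n - m < k then (1:ℝ) else 0)) :=
          Finset.sum_le_sum hptwise
      _ = (∑ k ∈ Finset.Icc 1 n, (g m) (T^[k] ω))
            + ∑ k ∈ Finset.Icc 1 n, (if n - m < k then (1:ℝ) else 0) := by
          rw [Finset.sum_add_distrib]
      _ ≤ (∑ k ∈ Finset.Icc 1 n, (g m) (T^[k] ω)) + m := by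
          have hle : ∑ k ∈ Finset.Icc 1 n, (if n - m < k then (1:ℝ) else 0) ≤ m := by
            rw [Finset.sum_boole]
            have hsub2 : (Finset.Icc 1 n).filter (fun k => n - m < k)
                ⊆ Finset.Ioc (n - m) n := by
              intro k hk2
              have h3 := Finset.mem_filter.mp hk2
              have h4 := Finset.mem_Icc.mp h3.1
              rw [Finset.mem_Ioc]
              omega
            have h5 := Finset.card_le_card hsub2
            have h6 : (Finset.Ioc (n - m) n).card ≤ m := by
              rw [Nat.card_Ioc]; omega
            exact_mod_cast h5.trans h6
          linarith
  -- conclusion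
  filter_upwards [hae2] with ω hω
  obtain ⟨hconv, hconvinf⟩ := hω
  rw [tendsto_order]
  constructor
  · intro a ha
    have hev1 := hconvinf.eventually_const_lt ha
    filter_upwards [hev1, eventually_ge_atTop 1] with n h1 h2
    have hn' : (0:ℝ) ≤ n := by positivity
    have hdiv : birkhoffAverage ℝ T ginf n (T ω) ≤ ((R ω n).card : ℝ) / n := by
      rw [birkhoffAverage, smul_eq_mul, inv_mul_eq_div]
      exact div_le_div_of_nonneg_right' (key1 ω n) hn'
    exact lt_of_lt_of_le h1 hdiv
  · intro b hb
    obtain ⟨m, hm⟩ := (hμconv.eventually_lt_const hb).exists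
    have hmn : Tendsto (fun n : ℕ => birkhoffAverage ℝ T (g m) n (T ω) + m / n) atTop
        (nhds ((μ (A m)).toReal + 0)) :=
      (hconv m).add (tendsto_const_div_atTop_nhds_zero_nat (m:ℝ))
    rw [add_zero] at hmn
    have hev2 := hmn.eventually_lt_const hm
    filter_upwards [hev2, eventually_ge_atTop 1] with n h1 h2
    have hn' : (0:ℝ) ≤ n := by positivity
    have hdiv : ((R ω n).card : ℝ) / n ≤ birkhoffAverage ℝ T (g m) n (T ω) + (m:ℝ) / n := by
      rw [birkhoffAverage, smul_eq_mul, inv_mul_eq_div, ← add_div]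
      exact div_le_div_of_nonneg_right' (key2 m ω n) hn'
    exact lt_of_le_of_lt hdiv h1
end

section
/- Let T be an invertible ergodic measure-preserving transformation of a probability space (Ω, B, P), G a countable group, f: Ω → G measurable, and F the associated cocycle. If F is transient (i.e., almost surely F(n,ω) = id_G for only finitely many n ≥ 1), then P({ω : F(n,ω) ≠ id_G for all n ≥ 1}) > 0, and consequently there exists c > 0 such that |R_ω(n)|/n → c almost surely. -/
open MeasureTheory Filter


section Helpers

private lemma bdd_above_of {a : ℕ → ℝ} {C : ℝ} (h : ∀ n, a n ≤ C) :
    IsBoundedUnder (· ≤ ·) atTop a := isBoundedUnder_of ⟨C, h⟩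

private lemma bdd_below_of {a : ℕ → ℝ} {C : ℝ} (h : ∀ n, C ≤ a n) :
    IsBoundedUnder (· ≥ ·) atTop a := isBoundedUnder_of ⟨C, h⟩

private lemma limsup_le_limsup_of_sub_tendsto {u v : ℕ → ℝ} {C : ℝ}
    (hu : ∀ n, |u n| ≤ C) (hv : ∀ n, |v n| ≤ C)
    (h : Tendsto (fun n => u n - v n) atTop (nhds 0)) :
    limsup u atTop ≤ limsup v atTop := by
  refine le_of_forall_pos_le_add fun ε hε => ?_
  have hev : ∀ᶠ n in atTop, u n ≤ v n + ε := by
    filter_upwards [h.eventually (eventually_lt_nhds hε)] with n hn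
    rw [sub_lt_iff_lt_add] at hn; linarith
  calc limsup u atTop ≤ limsup (fun n => v n + ε) atTop := by
        refine limsup_le_limsup hev ?_ ?_
        · exact (bdd_below_of (C := -C) (fun n => (abs_le.1 (hu n)).1)).isCoboundedUnder_le
        · exact bdd_above_of (C := C + ε) (fun n => by linarith [(abs_le.1 (hv n)).2])
    _ = limsup v atTop + ε := by
        refine limsup_add_const atTop v ε ?_ ?_
        · exact bdd_above_of (fun n => (abs_le.1 (hv n)).2)
        · exact (bdd_below_of (C := -C) (fun n => (abs_le.1 (hv n)).1)).isCoboundedUnder_le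

private lemma limsup_eq_limsup_of_sub_tendsto {u v : ℕ → ℝ} {C : ℝ}
    (hu : ∀ n, |u n| ≤ C) (hv : ∀ n, |v n| ≤ C)
    (h : Tendsto (fun n => u n - v n) atTop (nhds 0)) :
    limsup u atTop = limsup v atTop :=
  le_antisymm (limsup_le_limsup_of_sub_tendsto hu hv h)
    (limsup_le_limsup_of_sub_tendsto hv hu (by simpa using h.neg))

end Helpers

section Birkhoff

variable {Ω : Type*} [MeasurableSpace Ω]

/-- Birkhoff sum. -/
private def birkS (T : Ω → Ω) (g : Ω → ℝ) (n : ℕ) (ω : Ω) : ℝ :=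
  ∑ k ∈ Finset.range n, g (T^[k] ω)

private lemma birkS_add (T : Ω → Ω) (g : Ω → ℝ) (m n : ℕ) (ω : Ω) :
    birkS T g (m + n) ω = birkS T g m ω + birkS T g n (T^[m] ω) := by
  unfold birkS
  rw [Finset.sum_range_add]
  congr 1
  refine Finset.sum_congr rfl fun i _ => ?_
  rw [add_comm m i, Function.iterate_add_apply]

private lemma birkS_meas {T : Ω → Ω} {g : Ω → ℝ} (hT : Measurable T) (hg : Measurable g)
    (n : ℕ) : Measurable (birkS T g n) :=
  Finset.measurable_sum _ fun k _ => hg.comp (hT.iterate k)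

private lemma birkS_nonneg {T : Ω → Ω} {g : Ω → ℝ} (h0 : ∀ ω, 0 ≤ g ω) (n : ℕ) (ω : Ω) :
    0 ≤ birkS T g n ω :=
  Finset.sum_nonneg fun k _ => h0 _

private lemma birkS_le {T : Ω → Ω} {g : Ω → ℝ} (h1 : ∀ ω, g ω ≤ 1) (n : ℕ) (ω : Ω) :
    birkS T g n ω ≤ n := by
  calc birkS T g n ω ≤ ∑ _k ∈ Finset.range n, (1:ℝ) :=
        Finset.sum_le_sum fun k _ => h1 _
    _ = n := by simp

private lemma birkA_mem {T : Ω → Ω} {g : Ω → ℝ} (h0 : ∀ ω, 0 ≤ g ω) (h1 : ∀ ω, g ω ≤ 1)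
    (n : ℕ) (ω : Ω) : 0 ≤ birkS T g n ω / n ∧ birkS T g n ω / n ≤ 1 := by
  rcases Nat.eq_zero_or_pos n with rfl | hn
  · simp [birkS]
  · have hn' : (0:ℝ) < n := by exact_mod_cast hn
    constructor
    · exact div_nonneg (birkS_nonneg h0 n ω) hn'.le
    · rw [div_le_one hn']
      exact birkS_le h1 n ω

end Birkhoff

section BirkhoffCore

set_option linter.unusedSectionVars false

variable {Ω : Type*} [MeasurableSpace Ω]

private lemma birk_limsup_comp {T : Ω → Ω} {g : Ω → ℝ} (h0 : ∀ ω, 0 ≤ g ω)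
    (h1 : ∀ ω, g ω ≤ 1) (ω : Ω) :
    limsup (fun n => birkS T g n (T ω) / n) atTop
      = limsup (fun n => birkS T g n ω / n) atTop := by
  have hS : ∀ n, birkS T g n (T ω) = birkS T g (n + 1) ω - g ω := by
    intro n
    have h := birkS_add T g 1 n ω
    rw [add_comm 1 n] at h
    simp only [birkS, Finset.range_one, Finset.sum_singleton, Function.iterate_zero_apply,
      Function.iterate_one] at h ⊢
    rw [show (∑ k ∈ Finset.range n, g (T^[k] (T ω))) = birkS T g n (T ω) from rfl] at h ⊢
    linarith
  have hkey : limsup (fun n => birkS T g (n + 1) ω / (n + 1 : ℕ)) atTop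
      = limsup (fun n => birkS T g n ω / n) atTop :=
    Filter.limsup_nat_add (fun n => birkS T g n ω / n) 1
  rw [← hkey]
  refine limsup_eq_limsup_of_sub_tendsto (C := 1)
    (fun n => abs_le.2 ⟨by linarith [(birkA_mem (T := T) h0 h1 n (T ω)).1],
      (birkA_mem (T := T) h0 h1 n (T ω)).2⟩)
    (fun n => abs_le.2 ⟨by linarith [(birkA_mem (T := T) h0 h1 (n+1) ω).1],
      (birkA_mem (T := T) h0 h1 (n+1) ω).2⟩) ?_
  apply squeeze_zero_norm' (a := fun n : ℕ => 2 / (n : ℝ))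
  · filter_upwards [eventually_ge_atTop 1] with n hn
    have hn' : (0:ℝ) < n := by exact_mod_cast hn
    have hrw : birkS T g n (T ω) / n - birkS T g (n+1) ω / ((n:ℕ)+1 : ℕ)
        = (birkS T g (n+1) ω - g ω * ((n:ℝ)+1)) / ((n:ℝ) * ((n:ℝ)+1)) := by
      rw [hS n]
      push_cast
      field_simp
      ring
    rw [Real.norm_eq_abs]
    push_cast
    push_cast at hrw
    rw [hrw, abs_div, abs_of_pos (show (0:ℝ) < (n:ℝ) * ((n:ℝ)+1) by positivity)]
    have hnum : |birkS T g (n+1) ω - g ω * ((n:ℝ)+1)| ≤ (n:ℝ)+1 := by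
      have hb1 := birkS_nonneg (T := T) h0 (n+1) ω
      have hb2 := birkS_le (T := T) h1 (n+1) ω
      have hg1 := h0 ω
      have hg2 := h1 ω
      push_cast at hb2
      rw [abs_le]
      constructor <;> nlinarith
    calc |birkS T g (n+1) ω - g ω * ((n:ℝ)+1)| / ((n:ℝ) * ((n:ℝ)+1))
        ≤ ((n:ℝ)+1) / ((n:ℝ) * ((n:ℝ)+1)) := by gcongr
      _ = 1 / (n:ℝ) := by
          rw [mul_comm, ← div_div, div_self (by positivity : ((n:ℝ)+1) ≠ 0)]
      _ ≤ 2 / (n:ℝ) := by gcongr <;> norm_num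
  · exact tendsto_const_div_atTop_nhds_zero_nat 2

end BirkhoffCore

section BirkhoffMain

set_option linter.unusedSectionVars false

variable {Ω : Type*} [MeasurableSpace Ω] {μ : Measure Ω} [IsProbabilityMeasure μ]

private lemma integrable_of_bound {h : Ω → ℝ} (hh : Measurable h) (C : ℝ)
    (hb : ∀ ω, |h ω| ≤ C) : Integrable h μ :=
  (integrable_const C).mono' hh.aestronglyMeasurable (Eventually.of_forall hb)

private lemma birkhoff_limsup_le {T : Ω → Ω} (hT : Ergodic T μ) {g : Ω → ℝ}
    (hg : Measurable g) (h0 : ∀ ω, 0 ≤ g ω) (h1 : ∀ ω, g ω ≤ 1) :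
    ∀ᵐ ω ∂μ, limsup (fun n => birkS T g n ω / n) atTop ≤ ∫ x, g x ∂μ := by
  set L : Ω → ℝ := fun ω => limsup (fun n => birkS T g n ω / n) atTop with hLdef
  have hTm : Measurable T := hT.measurable
  have hLmeas : Measurable L :=
    Measurable.limsup fun n => (birkS_meas hTm hg n).div measurable_const
  have hLinv : L ∘ T = L := funext fun ω => birk_limsup_comp h0 h1 ω
  obtain ⟨c, hc⟩ := hT.ae_eq_const_of_ae_eq_comp₀ hLmeas.nullMeasurable (by rw [hLinv])
  have hLbounds : ∀ ω, 0 ≤ L ω ∧ L ω ≤ 1 := by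
    intro ω
    constructor
    · refine le_limsup_of_frequently_le (Frequently.of_forall fun n => ?_) ?_
      · exact (birkA_mem h0 h1 n ω).1
      · exact bdd_above_of fun n => (birkA_mem h0 h1 n ω).2
    · refine limsup_le_of_le ?_ (Eventually.of_forall fun n => (birkA_mem h0 h1 n ω).2)
      exact (bdd_below_of (C := 0) fun n => (birkA_mem h0 h1 n ω).1).isCoboundedUnder_le
  have hex : ∃ ω, L ω = c := by
    have : μ ≠ 0 := IsProbabilityMeasure.ne_zero μ
    have := MeasureTheory.ae_neBot.2 this
    exact hc.exists
  obtain ⟨ω₀, hω₀⟩ := hex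
  have hc0 : 0 ≤ c := hω₀ ▸ (hLbounds ω₀).1
  have hc1 : c ≤ 1 := hω₀ ▸ (hLbounds ω₀).2
  have hgInt : Integrable g μ :=
    integrable_of_bound hg 1 fun ω => abs_le.2 ⟨by linarith [h0 ω], h1 ω⟩
  suffices hcle : c ≤ ∫ x, g x ∂μ by
    filter_upwards [hc] with ω hω
    exact le_of_eq_of_le hω hcle
  by_contra hcon
  push_neg at hcon
  set I := ∫ x, g x ∂μ with hIdef
  have hI0 : 0 ≤ I := integral_nonneg h0
  set ε := (c - I) / 3 with hεdef
  have hε : 0 < ε := by simp only [hεdef]; linarith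
  have hεc : ε < c := by simp only [hεdef]; linarith
  -- the bad sets
  set B : ℕ → Set Ω := fun M => {ω | ∀ n, 1 ≤ n → n ≤ M → birkS T g n ω < n * (c - ε)}
    with hBdef
  have hBmeas : ∀ M, MeasurableSet (B M) := by
    intro M
    have : B M = ⋂ n, ⋂ (_ : 1 ≤ n), ⋂ (_ : n ≤ M), {ω | birkS T g n ω < n * (c - ε)} := by
      ext ω; simp [hBdef]
    rw [this]
    exact MeasurableSet.iInter fun n => MeasurableSet.iInter fun _ =>
      MeasurableSet.iInter fun _ => measurableSet_lt (birkS_meas hTm hg n) measurable_const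
  have hBanti : Antitone B := by
    intro M M' hMM' ω hω
    exact fun n hn1 hn2 => hω n hn1 (hn2.trans hMM')
  have hBnull : μ (⋂ M, B M) = 0 := by
    refine measure_mono_null (fun ω hω => ?_) (ae_iff.1 hc)
    simp only [Set.mem_iInter, hBdef, Set.mem_setOf_eq] at hω
    simp only [Set.mem_setOf_eq, Function.const_apply]
    intro hωc
    have hLle : L ω ≤ c - ε := by
      refine limsup_le_of_le ?_ ?_
      · exact (bdd_below_of (C := 0) fun n => (birkA_mem h0 h1 n ω).1).isCoboundedUnder_le
      · filter_upwards [eventually_ge_atTop 1] with n hn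
        have hn' : (0:ℝ) < n := by exact_mod_cast hn
        have h3 := hω n n hn le_rfl
        rw [div_le_iff₀ hn']
        nlinarith [h3]
    have hLc : L ω = c := hωc
    rw [hLc] at hLle
    linarith
  have htend : Tendsto (fun M => μ (B M)) atTop (nhds 0) := by
    have := tendsto_measure_iInter_atTop (fun M => (hBmeas M).nullMeasurableSet) hBanti
      ⟨0, measure_ne_top μ _⟩
    rwa [hBnull] at this
  have hev : ∀ᶠ M in atTop, μ (B M) < ENNReal.ofReal ε :=
    htend.eventually_lt_const (by simp [ENNReal.ofReal_pos, hε])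
  obtain ⟨M, hM1, hMε⟩ := ((eventually_ge_atTop 1).and hev).exists
  -- the modified function
  set h : Ω → ℝ := fun ω => g ω + (B M).indicator 1 ω with hhdef
  have hhmeas : Measurable h := hg.add (measurable_one.indicator (hBmeas M))
  have hind01 : ∀ ω, 0 ≤ (B M).indicator (1 : Ω → ℝ) ω ∧ (B M).indicator (1 : Ω → ℝ) ω ≤ 1 := by
    intro ω
    by_cases hm : ω ∈ B M <;> simp [Set.indicator_apply, hm]
  have hgh : ∀ ω, g ω ≤ h ω := fun ω => le_add_of_nonneg_right (hind01 ω).1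
  have hh0 : ∀ ω, 0 ≤ h ω := fun ω => le_trans (h0 ω) (hgh ω)
  have hh2 : ∀ ω, h ω ≤ 2 := fun ω => by
    have := (hind01 ω).2; have := h1 ω; simp only [hhdef]; linarith
  have hstep : ∀ ω, ∃ n, 1 ≤ n ∧ n ≤ M ∧ (n:ℝ) * (c - ε) ≤ birkS T h n ω := by
    intro ω
    by_cases hm : ω ∈ B M
    · refine ⟨1, le_rfl, hM1, ?_⟩
      simp only [birkS, Finset.range_one, Finset.sum_singleton, Function.iterate_zero_apply]
      have : h ω = g ω + 1 := by simp [hhdef, Set.indicator_of_mem hm]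
      rw [this]
      have := h0 ω
      push_cast
      linarith
    · simp only [hBdef, Set.mem_setOf_eq, not_forall, not_lt] at hm
      obtain ⟨n, hn1, hnM, hnS⟩ := hm
      refine ⟨n, hn1, hnM, hnS.trans ?_⟩
      exact Finset.sum_le_sum fun k _ => hgh _
  have hmain : ∀ N : ℕ, ∀ ω : Ω, ((N:ℝ) - M) * (c - ε) ≤ birkS T h N ω := by
    intro N
    induction N using Nat.strong_induction_on with
    | _ N IH =>
      intro ω
      obtain ⟨n₀, hn₀1, hn₀M, hn₀S⟩ := hstep ω
      by_cases hNn : N < n₀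
      · have hNM : (N:ℝ) - M ≤ 0 := by
          have : N < M := lt_of_lt_of_le hNn hn₀M
          have : (N:ℝ) < M := by exact_mod_cast this
          linarith
        have : ((N:ℝ) - M) * (c - ε) ≤ 0 := mul_nonpos_of_nonpos_of_nonneg hNM (by linarith)
        exact this.trans (birkS_nonneg hh0 N ω)
      · push_neg at hNn
        have hsplit : birkS T h N ω = birkS T h n₀ ω + birkS T h (N - n₀) (T^[n₀] ω) := by
          conv_lhs => rw [show N = n₀ + (N - n₀) by omega]
          exact birkS_add T h n₀ (N - n₀) ω
        have hIH := IH (N - n₀) (by omega) (T^[n₀] ω)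
        have hcast : ((N - n₀ : ℕ) : ℝ) = (N:ℝ) - n₀ := by
          push_cast [Nat.cast_sub hNn]; ring
        rw [hsplit]
        rw [hcast] at hIH
        nlinarith [hn₀S, hIH]
  -- integration
  have hhInt : Integrable h μ :=
    integrable_of_bound hhmeas 2 fun ω => abs_le.2 ⟨by linarith [hh0 ω], hh2 ω⟩
  have hcompInt : ∀ k : ℕ, Integrable (fun ω => h (T^[k] ω)) μ := fun k =>
    ((hT.toMeasurePreserving.iterate k).integrable_comp hhmeas.aestronglyMeasurable).2 hhInt
  have hSInt : ∀ N, Integrable (birkS T h N) μ := fun N => by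
    unfold birkS
    exact integrable_finset_sum _ fun k _ => hcompInt k
  have hintcomp : ∀ k : ℕ, ∫ ω, h (T^[k] ω) ∂μ = ∫ x, h x ∂μ := fun k => by
    rw [← MeasureTheory.integral_map (hT.toMeasurePreserving.iterate k).measurable.aemeasurable
      hhmeas.aestronglyMeasurable, (hT.toMeasurePreserving.iterate k).map_eq]
  have hSint_eq : ∀ N : ℕ, ∫ ω, birkS T h N ω ∂μ = N * ∫ x, h x ∂μ := by
    intro N
    unfold birkS
    rw [integral_finset_sum _ fun k _ => hcompInt k]
    rw [Finset.sum_congr rfl fun k _ => hintcomp k]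
    simp
  have hNineq : ∀ N : ℕ, ((N:ℝ) - M) * (c - ε) ≤ N * ∫ x, h x ∂μ := by
    intro N
    have h1' : ((N:ℝ) - M) * (c - ε) = ∫ _x, ((N:ℝ) - M) * (c - ε) ∂μ := by
      simp [integral_const, measure_univ]
    rw [h1', ← hSint_eq N]
    exact integral_mono (integrable_const _) (hSInt N) fun ω => hmain N ω
  have hIh : c - ε ≤ ∫ x, h x ∂μ := by
    have hlim : Tendsto (fun N : ℕ => (1 - (M:ℝ)/N) * (c - ε)) atTop (nhds (c - ε)) := by
      have h2' : Tendsto (fun N : ℕ => 1 - (M:ℝ)/N) atTop (nhds 1) := by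
        have := tendsto_const_div_atTop_nhds_zero_nat (M:ℝ)
        have := (tendsto_const_nhds (x := (1:ℝ)) (f := atTop)).sub this
        simpa using this
      have := h2'.mul (tendsto_const_nhds (x := c - ε))
      simpa using this
    refine le_of_tendsto hlim ?_
    filter_upwards [eventually_ge_atTop 1] with N hN
    have hN' : (0:ℝ) < N := by exact_mod_cast hN
    have hrw : (1 - (M:ℝ)/N) * (c - ε) = ((N:ℝ) - M) * (c - ε) / N := by
      field_simp
    rw [hrw, div_le_iff₀ hN']
    have := hNineq N
    linarith [this]
  have hIhval : ∫ x, h x ∂μ = I + (μ (B M)).toReal := by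
    have h4 : ∫ x, h x ∂μ = ∫ x, g x ∂μ + ∫ x, (B M).indicator 1 x ∂μ :=
      integral_add hgInt ((integrable_const (1:ℝ)).indicator (hBmeas M))
    rw [h4, integral_indicator_one (hBmeas M)]
    rfl
  have hBMε : (μ (B M)).toReal ≤ ε :=
    ENNReal.toReal_le_of_le_ofReal hε.le hMε.le
  rw [hIhval] at hIh
  linarith

end BirkhoffMain

section BirkhoffFull

set_option linter.unusedSectionVars false

variable {Ω : Type*} [MeasurableSpace Ω] {μ : Measure Ω} [IsProbabilityMeasure μ]

private theorem birkhoff_ae {T : Ω → Ω} (hT : Ergodic T μ) {g : Ω → ℝ}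
    (hg : Measurable g) (h0 : ∀ ω, 0 ≤ g ω) (h1 : ∀ ω, g ω ≤ 1) :
    ∀ᵐ ω ∂μ, Tendsto (fun n => birkS T g n ω / n) atTop (nhds (∫ x, g x ∂μ)) := by
  have h₁ := birkhoff_limsup_le hT hg h0 h1
  have hg' : Measurable (fun ω => 1 - g ω) := measurable_const.sub hg
  have h₂ := birkhoff_limsup_le hT hg' (fun ω => by linarith [h1 ω]) (fun ω => by linarith [h0 ω])
  have hgInt : Integrable g μ :=
    integrable_of_bound hg 1 fun ω => abs_le.2 ⟨by linarith [h0 ω], h1 ω⟩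
  have hint2 : ∫ x, (1 - g x) ∂μ = 1 - ∫ x, g x ∂μ := by
    rw [integral_sub (integrable_const 1) hgInt]
    simp
  rw [hint2] at h₂
  filter_upwards [h₁, h₂] with ω hω1 hω2
  have hbdd_above : IsBoundedUnder (· ≤ ·) atTop (fun n => birkS T g n ω / n) :=
    bdd_above_of fun n => (birkA_mem h0 h1 n ω).2
  have hbdd_below : IsBoundedUnder (· ≥ ·) atTop (fun n => birkS T g n ω / n) :=
    bdd_below_of fun n => (birkA_mem h0 h1 n ω).1
  have hS' : ∀ n : ℕ, birkS T (fun x => 1 - g x) n ω = n - birkS T g n ω := by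
    intro n
    unfold birkS
    rw [Finset.sum_sub_distrib]
    simp
  have hcongr : limsup (fun n => birkS T (fun x => 1 - g x) n ω / n) atTop
      = limsup (fun n => 1 - birkS T g n ω / n) atTop := by
    apply limsup_congr
    filter_upwards [eventually_ge_atTop 1] with n hn
    have hn' : ((n:ℝ)) ≠ 0 := by
      have : (1:ℝ) ≤ n := by exact_mod_cast hn
      linarith
    rw [hS', sub_div, div_self hn']
  have hsub : limsup (fun n => 1 - birkS T g n ω / n) atTop
      = 1 - liminf (fun n => birkS T g n ω / n) atTop :=
    limsup_const_sub atTop _ 1 hbdd_above.isCoboundedUnder_ge hbdd_below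
  rw [hcongr, hsub] at hω2
  have hliminf : ∫ x, g x ∂μ ≤ liminf (fun n => birkS T g n ω / n) atTop := by linarith
  have hle : liminf (fun n => birkS T g n ω / n) atTop
      ≤ limsup (fun n => birkS T g n ω / n) atTop :=
    liminf_le_limsup hbdd_above hbdd_below
  exact tendsto_of_liminf_eq_limsup (le_antisymm (by linarith) hliminf)
    (le_antisymm hω1 (by linarith)) hbdd_above hbdd_below

end BirkhoffFull

section Cocycle

set_option linter.unusedSectionVars false

variable {Ω G : Type*} [MeasurableSpace Ω] [Group G] [Countable G]
  [MeasurableSpace G] [MeasurableSingletonClass G]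
  {T : Ω → Ω} {f : Ω → G} {F : ℕ → Ω → G}

private lemma meas_mul_comp {a b : Ω → G} (ha : Measurable a) (hb : Measurable b) :
    Measurable fun ω => a ω * b ω := by
  apply measurable_to_countable'
  intro y
  have : (fun ω => a ω * b ω) ⁻¹' {y} = ⋃ u : G, (a ⁻¹' {u} ∩ b ⁻¹' {u⁻¹ * y}) := by
    ext ω
    simp only [Set.mem_preimage, Set.mem_singleton_iff, Set.mem_iUnion, Set.mem_inter_iff]
    constructor
    · intro h
      exact ⟨a ω, rfl, by rw [← h]; group⟩
    · rintro ⟨u, hu, hv⟩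
      rw [hu, hv]
      group
  rw [this]
  exact MeasurableSet.iUnion fun u =>
    (ha (measurableSet_singleton u)).inter (hb (measurableSet_singleton _))

private lemma F_zero (hF : ∀ n ω, F n ω = ((List.range n).map (fun i => f (T^[i] ω))).prod)
    (ω : Ω) : F 0 ω = 1 := by simp [hF]

private lemma F_succ (hF : ∀ n ω, F n ω = ((List.range n).map (fun i => f (T^[i] ω))).prod)
    (n : ℕ) (ω : Ω) : F (n + 1) ω = F n ω * f (T^[n] ω) := by
  rw [hF, hF, List.range_succ, List.map_append, List.prod_append]
  simp

private lemma F_meas (hT : Measurable T) (hf : Measurable f)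
    (hF : ∀ n ω, F n ω = ((List.range n).map (fun i => f (T^[i] ω))).prod)
    (n : ℕ) : Measurable (F n) := by
  induction n with
  | zero =>
    have : F 0 = fun _ => 1 := funext (F_zero hF)
    rw [this]; exact measurable_const
  | succ n ih =>
    have : F (n + 1) = fun ω => F n ω * f (T^[n] ω) := funext (F_succ hF n)
    rw [this]
    exact meas_mul_comp ih (hf.comp (hT.iterate n))

private lemma F_cocycle (hF : ∀ n ω, F n ω = ((List.range n).map (fun i => f (T^[i] ω))).prod)
    (m n : ℕ) (ω : Ω) : F (m + n) ω = F m ω * F n (T^[m] ω) := by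
  induction n with
  | zero => rw [F_zero hF]; simp
  | succ n ih =>
    have h1 : m + (n + 1) = (m + n) + 1 := by omega
    rw [h1, F_succ hF (m + n) ω, ih, F_succ hF n (T^[m] ω), mul_assoc]
    congr 2
    rw [add_comm m n, Function.iterate_add_apply]

end Cocycle

section BirkhoffIcc

set_option linter.unusedSectionVars false

variable {Ω : Type*} [MeasurableSpace Ω] {μ : Measure Ω} [IsProbabilityMeasure μ]

private lemma birkhoff_Icc {T : Ω → Ω} (hT : Ergodic T μ) {g : Ω → ℝ}
    (hg : Measurable g) (h0 : ∀ ω, 0 ≤ g ω) (h1 : ∀ ω, g ω ≤ 1) :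
    ∀ᵐ ω ∂μ, Tendsto (fun n => (∑ k ∈ Finset.Icc 1 n, g (T^[k] ω)) / n) atTop
      (nhds (∫ x, g x ∂μ)) := by
  filter_upwards [birkhoff_ae hT hg h0 h1] with ω hω
  set I := ∫ x, g x ∂μ with hIdef
  have hsum : ∀ n : ℕ, ∑ k ∈ Finset.Icc 1 n, g (T^[k] ω) = birkS T g (n + 1) ω - g ω := by
    intro n
    unfold birkS
    rw [Finset.sum_range_succ']
    rw [← Finset.Ico_add_one_right_eq_Icc, Finset.sum_Ico_eq_sum_range]
    simp only [Nat.succ_sub_one, Nat.add_sub_cancel_left, Function.iterate_zero_apply]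
    have h5 : ∀ i, g (T^[1 + i] ω) = g (T^[i + 1] ω) := fun i => by rw [add_comm]
    rw [Finset.sum_congr rfl fun i _ => h5 i]
    rw [Nat.add_sub_cancel]
    ring
  have h1' : Tendsto (fun n : ℕ => birkS T g (n + 1) ω / ((n:ℝ) + 1)) atTop (nhds I) := by
    have h := hω.comp (tendsto_add_atTop_nat 1)
    refine h.congr fun n => ?_
    simp only [Function.comp_apply]
    rw [Nat.cast_add, Nat.cast_one]
  have h2' : Tendsto (fun n : ℕ => ((n:ℝ) + 1) / n) atTop (nhds 1) := by
    have hz := tendsto_one_div_atTop_nhds_zero_nat (𝕜 := ℝ)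
    have := (tendsto_const_nhds (x := (1:ℝ)) (f := atTop (α := ℕ))).add hz
    rw [add_zero] at this
    refine this.congr' ?_
    filter_upwards [eventually_ge_atTop 1] with n hn
    have hn' : ((n:ℝ)) ≠ 0 := by
      have : (1:ℝ) ≤ n := by exact_mod_cast hn
      linarith
    field_simp
  have h3' : Tendsto (fun n : ℕ => g ω / n) atTop (nhds 0) :=
    tendsto_const_div_atTop_nhds_zero_nat (g ω)
  have hcomb := (h1'.mul h2').sub h3'
  rw [mul_one, sub_zero] at hcomb
  refine hcomb.congr' ?_
  filter_upwards [eventually_ge_atTop 1] with n hn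
  have hn' : ((n:ℝ)) ≠ 0 := by
    have : (1:ℝ) ≤ n := by exact_mod_cast hn
    linarith
  rw [hsum n]
  field_simp
  try ring

end BirkhoffIcc



/-- For a transient cocycle, the no-return probability is positive and the
range grows linearly almost surely. -/
theorem transient_cocycle_range_linear
    {Ω : Type*} [MeasurableSpace Ω] (μ : Measure Ω) [IsProbabilityMeasure μ]
    {G : Type*} [Group G] [Countable G] [DecidableEq G]
    [MeasurableSpace G] [MeasurableSingletonClass G]
    (T : Ω → Ω) (hTbij : Function.Bijective T) (hT : Ergodic T μ)
    (f : Ω → G) (hf : Measurable f)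
    (F : ℕ → Ω → G)
    (hF : ∀ n ω, F n ω = ((List.range n).map (fun i => f (T^[i] ω))).prod)
    (R : Ω → ℕ → Finset G)
    (hR : ∀ ω n, R ω n = (Finset.Icc 1 n).image (fun k => F k ω))
    (htrans : ∀ᵐ ω ∂μ, {n : ℕ | 1 ≤ n ∧ F n ω = 1}.Finite) :
    0 < μ {ω' | ∀ n : ℕ, 1 ≤ n → F n ω' ≠ 1} ∧
      ∃ c : ℝ, 0 < c ∧
        ∀ᵐ ω ∂μ, Tendsto (fun n => ((R ω n).card : ℝ) / n) atTop (nhds c) := by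
  classical
  have hTm : Measurable T := hT.measurable
  have hFm : ∀ n, Measurable (F n) := F_meas hTm hf hF
  set A : Set Ω := {ω' | ∀ n : ℕ, 1 ≤ n → F n ω' ≠ 1} with hAdef
  have hAmeas : MeasurableSet A := by
    have : A = ⋂ n, ⋂ (_ : 1 ≤ n), (F n ⁻¹' {1})ᶜ := by
      ext ω
      simp [hAdef, Set.mem_iInter]
    rw [this]
    exact MeasurableSet.iInter fun n => MeasurableSet.iInter fun _ =>
      ((hFm n) (measurableSet_singleton 1)).compl
  -- PART 1 : positivity of the no-return probability
  have hA_pos : 0 < μ A := by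
    rw [pos_iff_ne_zero]
    intro hA0
    have hnull : ∀ᵐ ω ∂μ, ∀ k : ℕ, T^[k] ω ∉ A := by
      rw [ae_all_iff]
      intro k
      have hpre : μ (T^[k] ⁻¹' A) = 0 := by
        rw [(hT.toMeasurePreserving.iterate k).measure_preimage hAmeas.nullMeasurableSet, hA0]
      have hset : {ω | ¬ T^[k] ω ∉ A} = T^[k] ⁻¹' A := by
        ext ω'; simp [Set.mem_preimage]
      rw [ae_iff, hset, hpre]
    have hμne : μ ≠ 0 := IsProbabilityMeasure.ne_zero μ
    have : (MeasureTheory.ae μ).NeBot := MeasureTheory.ae_neBot.2 hμne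
    obtain ⟨ω, hfin, hnA⟩ := (htrans.and hnull).exists
    have hrec : ∀ n : ℕ, F n ω = 1 → ∃ n', n < n' ∧ F n' ω = 1 := by
      intro n hn
      have h7 := hnA n
      simp only [hAdef, Set.mem_setOf_eq, not_forall] at h7
      push_neg at h7
      obtain ⟨m, hm1, hm⟩ := h7
      refine ⟨n + m, by omega, ?_⟩
      rw [F_cocycle hF n m ω, hn, hm, one_mul]
    obtain ⟨b, hb⟩ := hfin.bddAbove
    have hgrow : ∀ m : ℕ, ∃ n, m < n ∧ F n ω = 1 := by
      intro m
      induction m with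
      | zero =>
        obtain ⟨n, hn, h1'⟩ := hrec 0 (F_zero hF ω)
        exact ⟨n, hn, h1'⟩
      | succ m ih =>
        obtain ⟨n, hmn, hn⟩ := ih
        rcases Nat.lt_or_ge (m + 1) n with h | h
        · exact ⟨n, h, hn⟩
        · have hnm : n = m + 1 := by omega
          obtain ⟨n', hn', h1'⟩ := hrec (m + 1) (hnm ▸ hn)
          exact ⟨n', hn', h1'⟩
    obtain ⟨n, hbn, hn1⟩ := hgrow b
    have hmem : n ∈ {n : ℕ | 1 ≤ n ∧ F n ω = 1} := ⟨by omega, hn1⟩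
    exact absurd (hb hmem) (by omega)
  refine ⟨hA_pos, ?_⟩
  -- PART 2 : linear growth of the range
  set AM : ℕ → Set Ω := fun M => {ω' | ∀ m : ℕ, 1 ≤ m → m ≤ M → F m ω' ≠ 1} with hAMdef
  have hAMmeas : ∀ M, MeasurableSet (AM M) := by
    intro M
    have : AM M = ⋂ m, ⋂ (_ : 1 ≤ m), ⋂ (_ : m ≤ M), (F m ⁻¹' {1})ᶜ := by
      ext ω
      simp [hAMdef, Set.mem_iInter]
    rw [this]
    exact MeasurableSet.iInter fun m => MeasurableSet.iInter fun _ =>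
      MeasurableSet.iInter fun _ => ((hFm m) (measurableSet_singleton 1)).compl
  have hAM_anti : Antitone AM := fun M M' hMM' ω hω m hm1 hm2 => hω m hm1 (hm2.trans hMM')
  have hAM_inter : ⋂ M, AM M = A := by
    ext ω
    simp only [Set.mem_iInter, hAMdef, hAdef, Set.mem_setOf_eq]
    constructor
    · intro h n hn
      exact h n n hn le_rfl
    · intro h M m hm1 _
      exact h m hm1
  have hindmem : ∀ (s : Set Ω) (ω : Ω), 0 ≤ s.indicator (1 : Ω → ℝ) ω ∧
      s.indicator (1 : Ω → ℝ) ω ≤ 1 := by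
    intro s ω
    by_cases h : ω ∈ s <;> simp [Set.indicator_apply, h]
  set c := (μ A).toReal with hcdef
  have hc_pos : 0 < c := ENNReal.toReal_pos hA_pos.ne' (measure_ne_top μ A)
  refine ⟨c, hc_pos, ?_⟩
  have hBA : ∀ᵐ ω ∂μ, Tendsto
      (fun n => (∑ k ∈ Finset.Icc 1 n, A.indicator (1 : Ω → ℝ) (T^[k] ω)) / n) atTop
      (nhds c) := by
    have h8 := birkhoff_Icc hT (measurable_one.indicator hAmeas)
      (fun ω => (hindmem A ω).1) (fun ω => (hindmem A ω).2)
    rwa [integral_indicator_one hAmeas] at h8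
  have hBM : ∀ᵐ ω ∂μ, ∀ M : ℕ, Tendsto
      (fun n => (∑ k ∈ Finset.Icc 1 n, (AM M).indicator (1 : Ω → ℝ) (T^[k] ω)) / n) atTop
      (nhds ((μ (AM M)).toReal)) := by
    rw [ae_all_iff]
    intro M
    have h8 := birkhoff_Icc hT (measurable_one.indicator (hAMmeas M))
      (fun ω => (hindmem (AM M) ω).1) (fun ω => (hindmem (AM M) ω).2)
    rwa [integral_indicator_one (hAMmeas M)] at h8
  filter_upwards [hBA, hBM] with ω hA_t hM_t
  -- combinatorial lower bound
  have hlow : ∀ n : ℕ, (∑ k ∈ Finset.Icc 1 n, A.indicator (1 : Ω → ℝ) (T^[k] ω))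
      ≤ ((R ω n).card : ℝ) := by
    intro n
    have hsum_eq : (∑ k ∈ Finset.Icc 1 n, A.indicator (1 : Ω → ℝ) (T^[k] ω))
        = (((Finset.Icc 1 n).filter (fun k => T^[k] ω ∈ A)).card : ℝ) := by
      rw [Finset.sum_congr rfl (g := fun k => if T^[k] ω ∈ A then (1:ℝ) else 0)
        (fun k _ => by simp [Set.indicator_apply])]
      rw [Finset.sum_boole]
    rw [hsum_eq]
    have hcard : ((Finset.Icc 1 n).filter (fun k => T^[k] ω ∈ A)).card ≤ (R ω n).card := by
      have hkey : ∀ a b : ℕ, a ∈ (Finset.Icc 1 n).filter (fun k => T^[k] ω ∈ A) →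
          b ∈ (Finset.Icc 1 n).filter (fun k => T^[k] ω ∈ A) → a < b → F a ω ≠ F b ω := by
        intro a b ha _ hab heq
        have haA : T^[a] ω ∈ A := (Finset.mem_filter.1 ha).2
        have hco := F_cocycle hF a (b - a) ω
        rw [show a + (b - a) = b by omega] at hco
        have h9 : F a ω * F (b - a) (T^[a] ω) = F a ω * 1 := by
          rw [mul_one, ← hco, heq]
        exact haA (b - a) (by omega) (mul_left_cancel h9)
      apply Finset.card_le_card_of_injOn (fun k => F k ω)
      · intro k hk
        rw [hR]
        exact Finset.mem_image_of_mem _ (Finset.mem_filter.1 hk).1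
      · intro a ha b hb heq
        by_contra hne
        rcases lt_or_gt_of_ne hne with h | h
        · exact hkey a b ha hb h heq
        · exact hkey b a hb ha h heq.symm
    exact_mod_cast hcard
  -- combinatorial upper bound
  have hup : ∀ n M : ℕ, ((R ω n).card : ℝ)
      ≤ (∑ k ∈ Finset.Icc 1 n, (AM M).indicator (1 : Ω → ℝ) (T^[k] ω)) + M := by
    intro n M
    set D := (Finset.Icc 1 n).filter (fun k => ∀ j, k < j → j ≤ n → F j ω ≠ F k ω) with hDdef
    have hRD : (R ω n).card ≤ D.card := by
      apply Finset.card_le_card_of_surjOn (fun k => F k ω)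
      intro y hy
      rw [hR] at hy
      simp only [Finset.coe_image, Set.mem_image, Finset.mem_coe] at hy ⊢
      obtain ⟨k, hk, hky⟩ := hy
      set S := (Finset.Icc 1 n).filter (fun j => F j ω = y) with hSdef
      have hSne : S.Nonempty := ⟨k, Finset.mem_filter.2 ⟨hk, hky⟩⟩
      set k0 := S.max' hSne with hk0def
      have hk0S := S.max'_mem hSne
      obtain ⟨hk0I, hk0y⟩ := Finset.mem_filter.1 hk0S
      refine ⟨k0, ?_, hk0y⟩
      refine Finset.mem_filter.2 ⟨hk0I, ?_⟩
      intro j hkj hjn heq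
      have h1k0 : 1 ≤ k0 := (Finset.mem_Icc.1 hk0I).1
      have hjS : j ∈ S := Finset.mem_filter.2
        ⟨Finset.mem_Icc.2 ⟨by omega, hjn⟩, by rw [heq, hk0y]⟩
      have := S.le_max' j hjS
      omega
    have hDsub : D ⊆ ((Finset.Icc 1 n).filter (fun k => T^[k] ω ∈ AM M))
        ∪ ((Finset.Icc 1 n).filter (fun k => n < k + M)) := by
      intro k hk
      obtain ⟨hkI, hkD⟩ := Finset.mem_filter.1 hk
      by_cases hc' : n < k + M
      · exact Finset.mem_union_right _ (Finset.mem_filter.2 ⟨hkI, hc'⟩)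
      · refine Finset.mem_union_left _ (Finset.mem_filter.2 ⟨hkI, ?_⟩)
        intro m hm1 hmM heq1
        have hj : k + m ≤ n := by omega
        have hco := F_cocycle hF k m ω
        rw [heq1, mul_one] at hco
        exact hkD (k + m) (by omega) hj hco
    have hF2 : ((Finset.Icc 1 n).filter (fun k => n < k + M)).card ≤ M := by
      have hsub2 : (Finset.Icc 1 n).filter (fun k => n < k + M) ⊆
          Finset.Icc (n + 1 - M) n := by
        intro k hk
        obtain ⟨hkI, hkM⟩ := Finset.mem_filter.1 hk
        rw [Finset.mem_Icc] at hkI ⊢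
        omega
      calc ((Finset.Icc 1 n).filter (fun k => n < k + M)).card
          ≤ (Finset.Icc (n + 1 - M) n).card := Finset.card_le_card hsub2
        _ = n + 1 - (n + 1 - M) := Nat.card_Icc _ _
        _ ≤ M := by omega
    have hsum_eq : (∑ k ∈ Finset.Icc 1 n, (AM M).indicator (1 : Ω → ℝ) (T^[k] ω))
        = (((Finset.Icc 1 n).filter (fun k => T^[k] ω ∈ AM M)).card : ℝ) := by
      rw [Finset.sum_congr rfl (g := fun k => if T^[k] ω ∈ AM M then (1:ℝ) else 0)
        (fun k _ => by simp [Set.indicator_apply])]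
      rw [Finset.sum_boole]
    rw [hsum_eq]
    have hcard2 : (R ω n).card ≤
        ((Finset.Icc 1 n).filter (fun k => T^[k] ω ∈ AM M)).card + M := by
      calc (R ω n).card ≤ D.card := hRD
        _ ≤ (((Finset.Icc 1 n).filter (fun k => T^[k] ω ∈ AM M))
              ∪ ((Finset.Icc 1 n).filter (fun k => n < k + M))).card :=
            Finset.card_le_card hDsub
        _ ≤ ((Finset.Icc 1 n).filter (fun k => T^[k] ω ∈ AM M)).card
              + ((Finset.Icc 1 n).filter (fun k => n < k + M)).card :=
            Finset.card_union_le _ _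
        _ ≤ _ := by omega
    exact_mod_cast hcard2
  -- limit argument
  set u : ℕ → ℝ := fun n => ((R ω n).card : ℝ) / n with hudef
  have hu01 : ∀ n, 0 ≤ u n ∧ u n ≤ 1 := by
    intro n
    rcases Nat.eq_zero_or_pos n with rfl | hn
    · simp [hudef]
    · have hn' : (0:ℝ) < n := by exact_mod_cast hn
      have hcard : (R ω n).card ≤ n := by
        rw [hR]
        calc ((Finset.Icc 1 n).image (fun k => F k ω)).card
            ≤ (Finset.Icc 1 n).card := Finset.card_image_le
          _ = n := by rw [Nat.card_Icc]; omega
      constructor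
      · exact div_nonneg (by positivity) hn'.le
      · rw [div_le_one hn']
        exact_mod_cast hcard
  have hbdd_above : IsBoundedUnder (· ≤ ·) atTop u := bdd_above_of fun n => (hu01 n).2
  have hbdd_below : IsBoundedUnder (· ≥ ·) atTop u := bdd_below_of fun n => (hu01 n).1
  have hliminf : c ≤ liminf u atTop := by
    have hev : ∀ᶠ n in atTop,
        (∑ k ∈ Finset.Icc 1 n, A.indicator (1 : Ω → ℝ) (T^[k] ω)) / n ≤ u n := by
      filter_upwards [eventually_ge_atTop 1] with n hn
      have hn' : (0:ℝ) < n := by exact_mod_cast hn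
      exact (div_le_div_iff_of_pos_right hn').2 (hlow n)
    calc c = liminf (fun n => (∑ k ∈ Finset.Icc 1 n,
          A.indicator (1 : Ω → ℝ) (T^[k] ω)) / n) atTop := (hA_t.liminf_eq).symm
      _ ≤ liminf u atTop := by
          refine liminf_le_liminf hev ?_ hbdd_above.isCoboundedUnder_ge
          exact bdd_below_of fun n => div_nonneg
            (Finset.sum_nonneg fun k _ => (hindmem A (T^[k] ω)).1) (Nat.cast_nonneg n)
  have hlimsup : ∀ M : ℕ, limsup u atTop ≤ (μ (AM M)).toReal := by
    intro M
    have htend : Tendsto (fun n : ℕ => (∑ k ∈ Finset.Icc 1 n,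
        (AM M).indicator (1 : Ω → ℝ) (T^[k] ω)) / n + (M : ℝ) / n) atTop
        (nhds ((μ (AM M)).toReal)) := by
      have := (hM_t M).add (tendsto_const_div_atTop_nhds_zero_nat (M : ℝ))
      rwa [add_zero] at this
    have hev : ∀ᶠ n in atTop, u n ≤ (∑ k ∈ Finset.Icc 1 n,
        (AM M).indicator (1 : Ω → ℝ) (T^[k] ω)) / n + (M : ℝ) / n := by
      filter_upwards [eventually_ge_atTop 1] with n hn
      have hn' : (0:ℝ) < n := by exact_mod_cast hn
      have h10 := hup n M
      calc u n
          ≤ ((∑ k ∈ Finset.Icc 1 n, (AM M).indicator (1 : Ω → ℝ) (T^[k] ω)) + M) / n :=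
            (div_le_div_iff_of_pos_right hn').2 h10
        _ = _ := by rw [add_div]
    calc limsup u atTop ≤ limsup (fun n => (∑ k ∈ Finset.Icc 1 n,
          (AM M).indicator (1 : Ω → ℝ) (T^[k] ω)) / n + (M : ℝ) / n) atTop := by
          refine limsup_le_limsup hev hbdd_below.isCoboundedUnder_le ?_
          exact htend.isBoundedUnder_le
      _ = (μ (AM M)).toReal := htend.limsup_eq
  have hAMtend : Tendsto (fun M => (μ (AM M)).toReal) atTop (nhds c) := by
    have h6 : Tendsto (fun M => μ (AM M)) atTop (nhds (μ A)) := by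
      rw [← hAM_inter]
      exact tendsto_measure_iInter_atTop (fun M => (hAMmeas M).nullMeasurableSet) hAM_anti
        ⟨0, measure_ne_top μ _⟩
    exact (ENNReal.tendsto_toReal (measure_ne_top μ A)).comp h6
  have hlimsup_le : limsup u atTop ≤ c :=
    ge_of_tendsto hAMtend (Eventually.of_forall hlimsup)
  have hlele : liminf u atTop ≤ limsup u atTop := liminf_le_limsup hbdd_above hbdd_below
  exact tendsto_of_liminf_eq_limsup (le_antisymm (by linarith) hliminf)
    (le_antisymm hlimsup_le (by linarith)) hbdd_above hbdd_below
end

section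
/- Let S_n = Σ_{k=0}^{n-1} X_k be a ℤ-valued random walk with i.i.d. increments such that S_n → ∞ almost surely and P(X_1 > 1) > 0. Then P(S_n > 1 for all n ≥ 1) > 0. -/
open MeasureTheory ProbabilityTheory Filter

lemma shift_law' {Ω : Type*} [MeasurableSpace Ω] (μ : Measure Ω)
    (X : ℕ → Ω → ℤ) (hmeas : ∀ i, Measurable (X i))
    (hindep : iIndepFun X μ)
    (hident : ∀ i j, IdentDistrib (X i) (X j) μ μ) (N : ℕ) (r : ℕ) :
    μ.map (fun ω (j : Fin N) => X (r + j) ω) = μ.map (fun ω (j : Fin N) => X j ω) := by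
  classical
  have key : ∀ r : ℕ, ∀ v : Fin N → ℤ,
      μ ((fun ω (j : Fin N) => X (r + j) ω) ⁻¹' {v})
        = ∏ j ∈ Finset.range N, μ (X 0 ⁻¹' {if h : j < N then v ⟨j, h⟩ else 0}) := by
    intro r v
    set s : Finset ℕ := (Finset.range N).map ⟨fun j => r + j, add_right_injective r⟩ with hs
    set E : ℕ → Set ℤ := fun i => if h : i - r < N then {v ⟨i - r, h⟩} else Set.univ with hE
    have hEeq : ∀ j : Fin N, E (r + (j : ℕ)) = {v j} := by
      intro j
      have hlt := j.isLt
      have h1 : r + (j : ℕ) - r < N := by omega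
      simp only [hE, dif_pos h1]
      congr 1
      exact congrArg v (Fin.ext (by simp))
    have hpre : (fun ω (j : Fin N) => X (r + j) ω) ⁻¹' {v} = ⋂ i ∈ s, X i ⁻¹' E i := by
      ext ω
      simp only [Set.mem_preimage, Set.mem_singleton_iff, Set.mem_iInter]
      constructor
      · intro h i hi
        simp only [hs, Finset.mem_map, Finset.mem_range, Function.Embedding.coeFn_mk] at hi
        obtain ⟨j, hj, rfl⟩ := hi
        have h2 : X (r + (⟨j, hj⟩ : Fin N)) ω = v ⟨j, hj⟩ := congrFun h ⟨j, hj⟩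
        rw [hEeq ⟨j, hj⟩]
        simpa using h2
      · intro h
        funext j
        have hm : r + (j : ℕ) ∈ s := by
          simp only [hs, Finset.mem_map, Finset.mem_range, Function.Embedding.coeFn_mk]
          exact ⟨j, j.isLt, rfl⟩
        have := h _ hm
        rwa [hEeq j, Set.mem_singleton_iff] at this
    have hmeasE : ∀ i ∈ s, MeasurableSet (E i) := by
      intro i _
      by_cases h : i - r < N
      · simp only [hE, dif_pos h]
        exact measurableSet_singleton _
      · simp only [hE, dif_neg h]
        exact MeasurableSet.univ
    rw [hpre, hindep.measure_inter_preimage_eq_mul s hmeasE, hs, Finset.prod_map]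
    refine Finset.prod_congr rfl ?_
    intro j hj
    rw [Finset.mem_range] at hj
    have hEj : E ((⟨fun j => r + j, add_right_injective r⟩ : ℕ ↪ ℕ) j) = {v ⟨j, hj⟩} := by
      simpa using hEeq ⟨j, hj⟩
    rw [hEj, dif_pos hj]
    simp only [Function.Embedding.coeFn_mk]
    exact (hident (r + j) 0).measure_mem_eq (measurableSet_singleton _)
  have hf : ∀ r : ℕ, Measurable (fun ω (j : Fin N) => X (r + j) ω) := fun r =>
    measurable_pi_lambda _ fun j => hmeas (r + j)
  have hf0 : Measurable (fun ω (j : Fin N) => X j ω) :=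
    measurable_pi_lambda _ fun j => hmeas j
  refine Measure.ext_of_singleton fun v => ?_
  rw [Measure.map_apply (hf r) (measurableSet_singleton _),
    Measure.map_apply hf0 (measurableSet_singleton _), key r v]
  have h0 := key 0 v
  simp only [Nat.zero_add] at h0
  rw [← h0]

/-- If the ℤ-valued random walk drifts to +∞ a.s. and `P(X₁ > 1) > 0`,
then with positive probability `Sₙ > 1` for all `n ≥ 1`. -/
theorem pos_prob_stay_above_one
    {Ω : Type*} [MeasurableSpace Ω] (μ : Measure Ω) [IsProbabilityMeasure μ]
    (X : ℕ → Ω → ℤ) (hmeas : ∀ i, Measurable (X i))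
    (hindep : iIndepFun X μ)
    (hident : ∀ i j, IdentDistrib (X i) (X j) μ μ)
    (S : ℕ → Ω → ℤ) (hS : ∀ n ω, S n ω = ∑ i ∈ Finset.range n, X i ω)
    (hdrift : ∀ᵐ ω ∂μ, Tendsto (fun n => S n ω) atTop atTop)
    (hjump : 0 < μ {ω | 1 < X 1 ω}) :
    0 < μ {ω | ∀ n : ℕ, 1 ≤ n → 1 < S n ω} := by
  classical
  have hSm : ∀ n, Measurable (S n) := by
    intro n
    have h : S n = fun ω => ∑ i ∈ Finset.range n, X i ω := funext fun ω => hS n ω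
    rw [h]
    exact Finset.measurable_sum _ fun i _ => hmeas i
  -- Step 1: find m with μ (C m) ≠ 0
  set C : ℕ → Set Ω := fun m => {ω | ∀ n, 1 ≤ n → -(m : ℤ) < S n ω} with hC
  have hcover : ∀ᵐ ω ∂μ, ∃ m, ω ∈ C m := by
    filter_upwards [hdrift] with ω hω
    obtain ⟨N, hN⟩ := Filter.eventually_atTop.mp (hω.eventually_ge_atTop 1)
    refine ⟨1 + ∑ k ∈ Finset.range (N + 1), (S k ω).natAbs, fun n hn => ?_⟩
    by_cases hcase : N ≤ n
    · have h1 := hN n hcase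
      have h2 : (0:ℤ) ≤ ((∑ k ∈ Finset.range (N + 1), (S k ω).natAbs : ℕ) : ℤ) :=
        Int.natCast_nonneg _
      omega
    · have hmem : n ∈ Finset.range (N + 1) := Finset.mem_range.mpr (by omega)
      have h1 : (S n ω).natAbs ≤ ∑ k ∈ Finset.range (N + 1), (S k ω).natAbs :=
        Finset.single_le_sum (f := fun k => (S k ω).natAbs) (fun _ _ => Nat.zero_le _) hmem
      omega
  obtain ⟨m, hm⟩ : ∃ m, μ (C m) ≠ 0 := by
    by_contra h
    push_neg at h
    have h0 : μ (⋃ m, C m) = 0 := measure_iUnion_null h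
    have h1 : μ (⋃ m, C m)ᶜ = 0 := by
      have h2 := ae_iff.mp hcover
      convert h2 using 2
      ext ω
      simp
    have huniv := measure_univ (μ := μ)
    rw [← Set.union_compl_self (⋃ m, C m)] at huniv
    have hle := measure_union_le (μ := μ) (⋃ m, C m) (⋃ m, C m)ᶜ
    rw [huniv, h0, h1] at hle
    simp at hle
  set r : ℕ := m + 2 with hr
  -- the event A : first r steps all jump by > 1
  set A : Set Ω := ⋂ i ∈ Finset.range r, X i ⁻¹' Set.Ioi 1 with hA
  have hAmeas : MeasurableSet A :=
    Finset.measurableSet_biInter _ fun i _ => (hmeas i) measurableSet_Ioi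
  have hApos : μ A ≠ 0 := by
    have hprod := hindep.measure_inter_preimage_eq_mul (Finset.range r)
      (sets := fun _ => Set.Ioi 1) (fun i _ => measurableSet_Ioi)
    rw [hA, hprod, Finset.prod_ne_zero_iff]
    intro i _
    have h1 : μ (X i ⁻¹' Set.Ioi 1) = μ (X 1 ⁻¹' Set.Ioi 1) :=
      (hident i 1).measure_mem_eq measurableSet_Ioi
    have h2 : X 1 ⁻¹' Set.Ioi 1 = {ω | 1 < X 1 ω} := rfl
    rw [h1, h2]
    exact hjump.ne'
  -- finite-horizon events B r N
  have hfmeas : ∀ (r N : ℕ), Measurable (fun ω (j : Fin N) => X (r + j) ω) :=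
    fun r N => measurable_pi_lambda _ fun j => hmeas _
  set T : ∀ N : ℕ, Set (Fin N → ℤ) := fun N =>
    {v | ∀ n, 1 ≤ n → n ≤ N →
      -(m : ℤ) < ∑ j ∈ Finset.range n, if h : j < N then v ⟨j, h⟩ else 0} with hT
  set B : ℕ → ℕ → Set Ω := fun r N => (fun ω (j : Fin N) => X (r + j) ω) ⁻¹' T N with hB
  have hBiff : ∀ r N ω, ω ∈ B r N ↔
      ∀ n, 1 ≤ n → n ≤ N → -(m : ℤ) < ∑ j ∈ Finset.range n, X (r + j) ω := by
    intro r N ω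
    have hsum : ∀ n, n ≤ N →
        (∑ j ∈ Finset.range n, if h : j < N then X (r + ((⟨j, h⟩ : Fin N) : ℕ)) ω else 0)
          = ∑ j ∈ Finset.range n, X (r + j) ω := by
      intro n hn
      refine Finset.sum_congr rfl fun j hj => ?_
      rw [Finset.mem_range] at hj
      rw [dif_pos (lt_of_lt_of_le hj hn)]
    simp only [hB, Set.mem_preimage, hT, Set.mem_setOf_eq]
    constructor
    · intro h n hn hnN
      have := h n hn hnN
      rwa [hsum n hnN] at this
    · intro h n hn hnN
      rw [hsum n hnN]
      exact h n hn hnN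
  have hBlaw : ∀ N, μ (B r N) = μ (B 0 N) := by
    intro N
    have h1 := shift_law' μ X hmeas hindep hident N r
    have h2 := shift_law' μ X hmeas hindep hident N 0
    rw [hB]
    rw [← Measure.map_apply (hfmeas r N) (MeasurableSet.of_discrete),
      ← Measure.map_apply (hfmeas 0 N) (MeasurableSet.of_discrete), h1, h2]
  have hS0 : ∀ n (ω : Ω), ∑ j ∈ Finset.range n, X (0 + j) ω = S n ω := by
    intro n ω
    rw [hS n ω]
    exact Finset.sum_congr rfl fun j _ => by rw [Nat.zero_add]
  have hCB : C m = ⋂ N, B 0 N := by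
    ext ω
    simp only [Set.mem_iInter, hC, Set.mem_setOf_eq]
    constructor
    · intro h N
      rw [hBiff]
      intro n hn _
      rw [hS0 n ω]
      exact h n hn
    · intro h n hn
      have := (hBiff 0 n ω).mp (h n) n hn le_rfl
      rwa [hS0 n ω] at this
  -- independence of A and B r N
  have hIndepAB : ∀ N, μ (A ∩ B r N) = μ A * μ (B r N) := by
    intro N
    set Sfin : Finset ℕ := Finset.range r with hSfin
    set Tfin : Finset ℕ :=
      (Finset.range N).map ⟨fun j => r + j, add_right_injective r⟩ with hTfin
    have hdisj : Disjoint Sfin Tfin := by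
      rw [Finset.disjoint_left]
      intro a ha hb
      simp only [hSfin, Finset.mem_range] at ha
      simp only [hTfin, Finset.mem_map, Finset.mem_range, Function.Embedding.coeFn_mk] at hb
      obtain ⟨j, hj, rfl⟩ := hb
      omega
    have hInd := hindep.indepFun_finset Sfin Tfin hdisj hmeas
    set SA : Set (Sfin → ℤ) := {u | ∀ i : Sfin, 1 < u i} with hSA
    set SB : Set (Tfin → ℤ) := {u | ∀ n, 1 ≤ n → n ≤ N →
      -(m : ℤ) < ∑ j ∈ Finset.range n, if h : r + j ∈ Tfin then u ⟨r + j, h⟩ else 0} with hSB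
    have hA' : A = (fun a (i : Sfin) => X i a) ⁻¹' SA := by
      ext ω
      simp only [hA, Set.mem_iInter, Set.mem_preimage, Set.mem_Ioi, hSA, Set.mem_setOf_eq,
        Subtype.forall]
    have hB' : B r N = (fun a (i : Tfin) => X i a) ⁻¹' SB := by
      ext ω
      rw [hBiff]
      simp only [Set.mem_preimage, hSB, Set.mem_setOf_eq]
      have hsum : ∀ n, n ≤ N →
          (∑ j ∈ Finset.range n, if h : r + j ∈ Tfin then X (r + j) ω else 0)
            = ∑ j ∈ Finset.range n, X (r + j) ω := by
        intro n hn
        refine Finset.sum_congr rfl fun j hj => ?_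
        rw [Finset.mem_range] at hj
        have hmem : r + j ∈ Tfin := by
          simp only [hTfin, Finset.mem_map, Finset.mem_range, Function.Embedding.coeFn_mk]
          exact ⟨j, lt_of_lt_of_le hj hn, rfl⟩
        rw [dif_pos hmem]
      constructor
      · intro h n hn hnN
        rw [hsum n hnN]
        exact h n hn hnN
      · intro h n hn hnN
        have := h n hn hnN
        rwa [hsum n hnN] at this
    rw [hA', hB']
    exact hInd.measure_inter_preimage_eq_mul _ _ MeasurableSet.of_discrete MeasurableSet.of_discrete
  -- continuity from above
  have hBanti : ∀ ⦃N N' : ℕ⦄, N ≤ N' → A ∩ B r N' ⊆ A ∩ B r N := by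
    intro N N' hNN'
    refine Set.inter_subset_inter_right _ ?_
    intro ω hω
    rw [hBiff] at hω ⊢
    exact fun n hn hnN => hω n hn (le_trans hnN hNN')
  have hABmeas : ∀ N, MeasurableSet (A ∩ B r N) := by
    intro N
    exact hAmeas.inter ((hfmeas r N) MeasurableSet.of_discrete)
  have hinter : μ (A ∩ ⋂ N, B r N) = ⨅ N, μ (A ∩ B r N) := by
    rw [Set.inter_iInter]
    exact Directed.measure_iInter (fun N => (hABmeas N).nullMeasurableSet)
      (fun N N' => ⟨max N N', hBanti (le_max_left _ _), hBanti (le_max_right _ _)⟩)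
      ⟨0, measure_ne_top μ _⟩
  have hlow : μ A * μ (C m) ≤ μ (A ∩ ⋂ N, B r N) := by
    rw [hinter]
    refine le_iInf fun N => ?_
    rw [hIndepAB N, hBlaw N]
    refine mul_le_mul_right ?_ _
    rw [hCB]
    exact measure_mono (Set.iInter_subset _ N)
  -- inclusion into target
  have hsub : A ∩ (⋂ N, B r N) ⊆ {ω | ∀ n : ℕ, 1 ≤ n → 1 < S n ω} := by
    rintro ω ⟨hA1, hB1⟩
    simp only [Set.mem_iInter] at hB1
    have hX2 : ∀ i < r, 2 ≤ X i ω := by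
      intro i hi
      rw [hA, Set.mem_iInter] at hA1
      have := hA1 i
      rw [Set.mem_iInter] at this
      have h2 := this (Finset.mem_range.mpr hi)
      rw [Set.mem_preimage, Set.mem_Ioi] at h2
      omega
    have hsum2 : ∀ k, k ≤ r → (2 * (k : ℤ)) ≤ ∑ i ∈ Finset.range k, X i ω := by
      intro k hk
      calc (2 * (k : ℤ)) = ∑ _i ∈ Finset.range k, (2 : ℤ) := by
            rw [Finset.sum_const, Finset.card_range, nsmul_eq_mul]; ring
        _ ≤ ∑ i ∈ Finset.range k, X i ω :=
            Finset.sum_le_sum fun i hi => hX2 i (lt_of_lt_of_le (Finset.mem_range.mp hi) hk)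
    have htail : ∀ n, 1 ≤ n → -(m : ℤ) < ∑ j ∈ Finset.range n, X (r + j) ω :=
      fun n hn => (hBiff r n ω).mp (hB1 n) n hn le_rfl
    intro n hn
    rw [hS n ω]
    by_cases hcase : n ≤ r
    · have h2 := hsum2 n hcase
      omega
    · push_neg at hcase
      obtain ⟨k, rfl⟩ : ∃ k, n = r + k := ⟨n - r, by omega⟩
      rw [Finset.sum_range_add]
      have h1 := hsum2 r le_rfl
      have h2 := htail k (by omega)
      have hrc : (r : ℤ) = (m : ℤ) + 2 := by rw [hr]; push_cast; ring
      omega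
  calc (0 : ENNReal) < μ A * μ (C m) := ENNReal.mul_pos hApos hm
    _ ≤ μ (A ∩ ⋂ N, B r N) := hlow
    _ ≤ μ {ω | ∀ n : ℕ, 1 ≤ n → 1 < S n ω} := measure_mono hsub
end

section
/- Let G be a finitely generated group and p a symmetric probability measure on G defining a transient random walk. Then the Green function G(g) = Σ_{n≥0} p_n(id, g) tends to 0 as g tends to infinity, i.e., for every ε > 0 the set {g ∈ G : G(g) > ε} is finite. -/
open Filter
open scoped ENNReal

section GreenAux

variable {G : Type*} [Group G] [Countable G] [DecidableEq G]

private lemma ennreal_mul_le_sq_add_sq (x y : ℝ≥0∞) : x * y ≤ x * x + y * y := by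
  rcases le_total x y with h | h
  · calc x * y ≤ y * y := by gcongr
      _ ≤ x * x + y * y := le_add_self
  · calc x * y ≤ x * x := by gcongr
      _ ≤ x * x + y * y := le_self_add

private lemma pn_translate (p : G → ℝ≥0∞) (pn : ℕ → G → G → ℝ≥0∞)
    (hpn0 : ∀ g h, pn 0 g h = if g = h then 1 else 0)
    (hpnsucc : ∀ n g h, pn (n + 1) g h = ∑' k : G, pn n g k * p (k⁻¹ * h)) :
    ∀ n g h, pn n g h = pn n 1 (g⁻¹ * h) := by
  intro n
  induction n with
  | zero =>
    intro g h
    rw [hpn0, hpn0]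
    congr 1
    rw [eq_iff_iff]
    constructor
    · rintro rfl; simp
    · intro h1
      have : g⁻¹ * h = 1 := h1.symm
      rw [inv_mul_eq_one] at this
      exact this
  | succ n ih =>
    intro g h
    rw [hpnsucc, hpnsucc]
    calc ∑' k, pn n g k * p (k⁻¹ * h)
        = ∑' k, pn n 1 (g⁻¹ * k) * p (k⁻¹ * h) := by
          exact tsum_congr fun k => by rw [ih]
      _ = ∑' k, pn n 1 (g⁻¹ * (g * k)) * p ((g * k)⁻¹ * h) :=
          (Equiv.tsum_eq (Equiv.mulLeft g) (fun k => pn n 1 (g⁻¹ * k) * p (k⁻¹ * h))).symm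
      _ = ∑' k, pn n 1 k * p (k⁻¹ * (g⁻¹ * h)) := by
          exact tsum_congr fun k => by
            simp [mul_assoc, mul_inv_rev]

private lemma pn_CK (p : G → ℝ≥0∞) (pn : ℕ → G → G → ℝ≥0∞)
    (hpn0 : ∀ g h, pn 0 g h = if g = h then 1 else 0)
    (hpnsucc : ∀ n g h, pn (n + 1) g h = ∑' k : G, pn n g k * p (k⁻¹ * h)) :
    ∀ m n g h, pn (m + n) g h = ∑' k : G, pn m g k * pn n k h := by
  intro m n
  induction n with
  | zero =>
    intro g h
    rw [Nat.add_zero]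
    symm
    rw [tsum_eq_single h (fun b hb => by rw [hpn0]; simp [hb])]
    rw [hpn0]; simp
  | succ n ih =>
    intro g h
    rw [show m + (n + 1) = (m + n) + 1 from rfl, hpnsucc]
    calc ∑' j, pn (m + n) g j * p (j⁻¹ * h)
        = ∑' j, (∑' k, pn m g k * pn n k j) * p (j⁻¹ * h) := by
          exact tsum_congr fun j => by rw [ih]
      _ = ∑' j, ∑' k, pn m g k * pn n k j * p (j⁻¹ * h) := by
          exact tsum_congr fun j => by rw [ENNReal.tsum_mul_right]
      _ = ∑' k, ∑' j, pn m g k * pn n k j * p (j⁻¹ * h) := ENNReal.tsum_comm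
      _ = ∑' k, pn m g k * ∑' j, pn n k j * p (j⁻¹ * h) := by
          exact tsum_congr fun k => by
            simp only [mul_assoc]; rw [ENNReal.tsum_mul_left]
      _ = ∑' k, pn m g k * pn (n + 1) k h := by
          exact tsum_congr fun k => by rw [hpnsucc]

private lemma pn_one (p : G → ℝ≥0∞) (pn : ℕ → G → G → ℝ≥0∞)
    (hpn0 : ∀ g h, pn 0 g h = if g = h then 1 else 0)
    (hpnsucc : ∀ n g h, pn (n + 1) g h = ∑' k : G, pn n g k * p (k⁻¹ * h)) :
    ∀ g h, pn 1 g h = p (g⁻¹ * h) := by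
  intro g h
  rw [hpnsucc 0 g h]
  rw [tsum_eq_single g (fun b hb => by rw [hpn0]; simp [Ne.symm hb])]
  rw [hpn0]; simp

private lemma pn_symm (p : G → ℝ≥0∞) (hsymm : ∀ g, p g = p g⁻¹)
    (pn : ℕ → G → G → ℝ≥0∞)
    (hpn0 : ∀ g h, pn 0 g h = if g = h then 1 else 0)
    (hpnsucc : ∀ n g h, pn (n + 1) g h = ∑' k : G, pn n g k * p (k⁻¹ * h)) :
    ∀ n g, pn n 1 g = pn n 1 g⁻¹ := by
  have htr := pn_translate p pn hpn0 hpnsucc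
  have hCK := pn_CK p pn hpn0 hpnsucc
  have hone := pn_one p pn hpn0 hpnsucc
  intro n
  induction n with
  | zero =>
    intro g
    rw [hpn0, hpn0]
    congr 1
    rw [eq_iff_iff]
    constructor
    · rintro rfl; simp
    · intro h1; rw [← inv_inv g, ← h1]; simp
  | succ n ih =>
    intro g
    have lhs : pn (n + 1) 1 g = ∑' k, p k * pn n 1 (k * g) := by
      rw [show n + 1 = 1 + n by omega, hCK 1 n 1 g]
      calc ∑' k, pn 1 1 k * pn n k g
          = ∑' k, p k * pn n 1 (k⁻¹ * g) := by
            exact tsum_congr fun k => by rw [hone, htr]; simp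
        _ = ∑' k, p k⁻¹ * pn n 1 (k⁻¹⁻¹ * g) :=
            (Equiv.tsum_eq (Equiv.inv G) (fun k => p k * pn n 1 (k⁻¹ * g))).symm
        _ = ∑' k, p k * pn n 1 (k * g) := by
            exact tsum_congr fun k => by rw [← hsymm]; simp
    rw [lhs, hpnsucc]
    symm
    calc ∑' k, pn n 1 k * p (k⁻¹ * g⁻¹)
        = ∑' k, pn n 1 (g⁻¹ * k⁻¹) * p ((g⁻¹ * k⁻¹)⁻¹ * g⁻¹) :=
          (Equiv.tsum_eq ((Equiv.inv G).trans (Equiv.mulLeft g⁻¹))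
            (fun k => pn n 1 k * p (k⁻¹ * g⁻¹))).symm
      _ = ∑' k, p k * pn n 1 (k * g) := by
          refine tsum_congr fun k => ?_
          have h1 : (g⁻¹ * k⁻¹)⁻¹ * g⁻¹ = k := by group
          have h2 : pn n 1 (g⁻¹ * k⁻¹) = pn n 1 (k * g) := by
            rw [ih (g⁻¹ * k⁻¹)]; congr 1; group
          rw [h1, h2, mul_comm]

private lemma pn_mass (p : G → ℝ≥0∞) (hsum : ∑' g, p g = 1)
    (pn : ℕ → G → G → ℝ≥0∞)
    (hpn0 : ∀ g h, pn 0 g h = if g = h then 1 else 0)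
    (hpnsucc : ∀ n g h, pn (n + 1) g h = ∑' k : G, pn n g k * p (k⁻¹ * h)) :
    ∀ n, ∑' g : G, pn n 1 g = 1 := by
  intro n
  induction n with
  | zero =>
    rw [tsum_eq_single 1 (fun b hb => by rw [hpn0]; simp [Ne.symm hb])]
    rw [hpn0]; simp
  | succ n ih =>
    calc ∑' g : G, pn (n + 1) 1 g
        = ∑' g : G, ∑' k : G, pn n 1 k * p (k⁻¹ * g) := by
          exact tsum_congr fun g => by rw [hpnsucc]
      _ = ∑' k : G, ∑' g : G, pn n 1 k * p (k⁻¹ * g) := ENNReal.tsum_comm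
      _ = ∑' k : G, pn n 1 k * ∑' g : G, p (k⁻¹ * g) := by
          exact tsum_congr fun k => ENNReal.tsum_mul_left
      _ = ∑' k : G, pn n 1 k * 1 := by
          refine tsum_congr fun k => ?_
          congr 1
          rw [← hsum]
          exact Equiv.tsum_eq (Equiv.mulLeft k⁻¹) p
      _ = 1 := by simpa using ih

private lemma pn_sq_bound (p : G → ℝ≥0∞) (hsymm : ∀ g, p g = p g⁻¹)
    (pn : ℕ → G → G → ℝ≥0∞)
    (hpn0 : ∀ g h, pn 0 g h = if g = h then 1 else 0)
    (hpnsucc : ∀ n g h, pn (n + 1) g h = ∑' k : G, pn n g k * p (k⁻¹ * h)) :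
    ∀ a b g, pn (a + b) 1 g ≤ pn (a + a) 1 1 + pn (b + b) 1 1 := by
  have htr := pn_translate p pn hpn0 hpnsucc
  have hCK := pn_CK p pn hpn0 hpnsucc
  have hs := pn_symm p hsymm pn hpn0 hpnsucc
  intro a b g
  have e1 : ∑' k : G, pn a 1 k * pn a 1 k = pn (a + a) 1 1 := by
    rw [hCK a a 1 1]
    refine tsum_congr fun k => ?_
    congr 1
    rw [htr a k 1, hs a k]
    congr 1
    simp
  have e2 : ∑' k : G, pn b k g * pn b k g = pn (b + b) 1 1 := by
    have : ∑' k : G, pn b k g * pn b k g = pn (b + b) g g := by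
      rw [hCK b b g g]
      refine tsum_congr fun k => ?_
      congr 1
      rw [htr b g k, htr b k g, hs b (g⁻¹ * k)]
      congr 1
      group
    rw [this, htr (b + b) g g]
    simp
  calc pn (a + b) 1 g = ∑' k : G, pn a 1 k * pn b k g := hCK a b 1 g
    _ ≤ ∑' k : G, (pn a 1 k * pn a 1 k + pn b k g * pn b k g) :=
        ENNReal.tsum_le_tsum fun k => ennreal_mul_le_sq_add_sq _ _
    _ = (∑' k : G, pn a 1 k * pn a 1 k) + ∑' k : G, pn b k g * pn b k g :=
        ENNReal.tsum_add
    _ = pn (a + a) 1 1 + pn (b + b) 1 1 := by rw [e1, e2]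

end GreenAux

/-- For a symmetric transient random walk on a finitely generated group,
the Green function tends to 0 at infinity: `{g | G(g) > ε}` is finite for every `ε > 0`. -/
theorem green_function_vanishes_symmetric
    {G : Type*} [Group G] [Countable G] [DecidableEq G]
    (hfg : ∃ Sgen : Finset G, Subgroup.closure (Sgen : Set G) = ⊤)
    (p : G → ℝ≥0∞) (hsum : ∑' g, p g = 1) (hsymm : ∀ g, p g = p g⁻¹)
    (pn : ℕ → G → G → ℝ≥0∞)
    (hpn0 : ∀ g h, pn 0 g h = if g = h then 1 else 0)
    (hpnsucc : ∀ n g h, pn (n + 1) g h = ∑' k : G, pn n g k * p (k⁻¹ * h))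
    (htrans : (∑' n : ℕ, pn n 1 1) < ⊤) :
    ∀ ε : ℝ≥0∞, 0 < ε → {g : G | ε < ∑' n : ℕ, pn n 1 g}.Finite := by
  intro ε hε
  rcases eq_or_ne ε ⊤ with rfl | hεtop
  · have : {g : G | ⊤ < ∑' n : ℕ, pn n 1 g} = ∅ := by
      ext g; simp [not_top_lt]
    rw [this]; exact Set.finite_empty
  -- notation
  set q : ℕ → ℝ≥0∞ := fun n => pn n 1 1 with hq
  set T : ℕ → ℝ≥0∞ := fun j => ∑' m : ℕ, q (m + j) with hT
  have hqtop : ∑' n, q n ≠ ⊤ := htrans.ne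
  -- T is antitone-ish: T (j+1) ≤ T j
  have hTmono : ∀ j, T (j + 1) ≤ T j := by
    intro j
    have : ∑' m : ℕ, q ((m + 1) + j) ≤ ∑' m : ℕ, q (m + j) :=
      ENNReal.tsum_comp_le_tsum_of_injective
        (f := fun m : ℕ => m + 1) (fun a b h => by simpa using h) (fun m => q (m + j))
    calc T (j + 1) = ∑' m : ℕ, q ((m + 1) + j) := by
          refine tsum_congr fun m => ?_; congr 1; omega
      _ ≤ T j := this
  -- pointwise bound for pn (k+1) 1 g
  have hbound : ∀ (k : ℕ) (g : G),
      pn (k + 1) 1 g ≤ (q k + q (k + 1)) + (q (k + 1) + q (k + 2)) := by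
    intro k g
    set a := (k + 1) / 2 with ha
    set b := (k + 1) - a with hb
    have hab : a + b = k + 1 := by omega
    have haa : a + a = k ∨ a + a = k + 1 := by omega
    have hbb : b + b = k + 1 ∨ b + b = k + 2 := by omega
    have h1 := pn_sq_bound p hsymm pn hpn0 hpnsucc a b g
    rw [hab] at h1
    refine h1.trans (add_le_add ?_ ?_)
    · rcases haa with h | h <;> rw [h]
      · exact le_self_add
      · exact le_add_self
    · rcases hbb with h | h <;> rw [h]
      · exact le_self_add
      · exact le_add_self
  -- choose N with T N small
  have hδ : (0 : ℝ≥0∞) < ε / 2 / 2 / 2 := by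
    have h2 : ε / 2 ≠ 0 := by
      simp [ENNReal.div_eq_zero_iff, hε.ne']
    have h3 : ε / 2 / 2 ≠ 0 := by
      simp [ENNReal.div_eq_zero_iff, h2]
    have h4 : ε / 2 / 2 / 2 ≠ 0 := by
      simp [ENNReal.div_eq_zero_iff, h3]
    exact pos_iff_ne_zero.mpr h4
  obtain ⟨N, hN⟩ : ∃ N, T N < ε / 2 / 2 / 2 := by
    have := ENNReal.tendsto_sum_nat_add q hqtop
    have := this.eventually (Filter.Tendsto.eventually_lt_const hδ tendsto_id) |>.exists
    · exact this
  -- tail bound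
  have htail : ∀ g : G, (∑' m : ℕ, pn (m + (N + 1)) 1 g) ≤ ε / 2 := by
    intro g
    have step : ∀ m : ℕ, pn (m + (N + 1)) 1 g ≤
        ((q (m + N) + q (m + (N + 1))) + (q (m + (N + 1)) + q (m + (N + 2)))) := by
      exact fun m => hbound (m + N) g
    calc (∑' m : ℕ, pn (m + (N + 1)) 1 g)
        ≤ ∑' m : ℕ, ((q (m + N) + q (m + (N + 1))) + (q (m + (N + 1)) + q (m + (N + 2)))) :=
          ENNReal.tsum_le_tsum step
      _ = (T N + T (N + 1)) + (T (N + 1) + T (N + 2)) := by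
          rw [ENNReal.tsum_add, ENNReal.tsum_add, ENNReal.tsum_add]
      _ ≤ (T N + T N) + (T N + T N) := by
          have h1 : T (N + 1) ≤ T N := hTmono N
          have h2 : T (N + 2) ≤ T N := le_trans (hTmono (N + 1)) (hTmono N)
          gcongr
      _ ≤ (ε / 2 / 2 / 2 + ε / 2 / 2 / 2) + (ε / 2 / 2 / 2 + ε / 2 / 2 / 2) := by
          gcongr <;> exact hN.le
      _ = ε / 2 := by rw [ENNReal.add_halves, ENNReal.add_halves]
  -- head threshold
  set δ : ℝ≥0∞ := ε / 2 / (N + 1) with hδdef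
  have hδ0 : δ ≠ 0 := by
    have h2 : ε / 2 ≠ 0 := by simp [ENNReal.div_eq_zero_iff, hε.ne']
    simp [hδdef, ENNReal.div_eq_zero_iff, h2, ENNReal.natCast_ne_top]
  -- each level set is finite
  have hlevel : ∀ n : ℕ, {g : G | δ ≤ pn n 1 g}.Finite := by
    intro n
    exact ENNReal.finite_const_le_of_tsum_ne_top
      (by rw [pn_mass p hsum pn hpn0 hpnsucc n]; exact ENNReal.one_ne_top) hδ0
  -- main inclusion
  have hsub : {g : G | ε < ∑' n : ℕ, pn n 1 g} ⊆
      ⋃ n ∈ Finset.range (N + 1), {g : G | δ ≤ pn n 1 g} := by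
    intro g hg
    simp only [Set.mem_setOf_eq] at hg
    have hsplit : (∑ n ∈ Finset.range (N + 1), pn n 1 g) + (∑' m : ℕ, pn (m + (N + 1)) 1 g)
        = ∑' n : ℕ, pn n 1 g :=
      Summable.sum_add_tsum_nat_add' (f := fun n => pn n 1 g) (k := N + 1) ENNReal.summable
    have hhead : ε / 2 < ∑ n ∈ Finset.range (N + 1), pn n 1 g := by
      by_contra hcon
      push_neg at hcon
      have : (∑' n : ℕ, pn n 1 g) ≤ ε / 2 + ε / 2 := by
        rw [← hsplit]
        exact add_le_add hcon (htail g)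
      rw [ENNReal.add_halves] at this
      exact absurd (lt_of_lt_of_le hg this) (lt_irrefl ε)
    -- some term exceeds δ
    by_contra hnot
    simp only [Set.mem_iUnion, Set.mem_setOf_eq, not_exists] at hnot
    push_neg at hnot
    have hall : ∀ n ∈ Finset.range (N + 1), pn n 1 g ≤ δ := by
      intro n hn
      exact le_of_lt (hnot n hn)
    have hsum' : (∑ n ∈ Finset.range (N + 1), pn n 1 g) ≤ (Finset.range (N + 1)).card • δ :=
      Finset.sum_le_card_nsmul _ _ δ (by simpa using hall)
    have hcard : (Finset.range (N + 1)).card • δ ≤ ε / 2 := by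
      rw [Finset.card_range, nsmul_eq_mul, hδdef]
      have hb0 : ((N : ℝ≥0∞) + 1) ≠ 0 := by simp
      have hbt : ((N : ℝ≥0∞) + 1) ≠ ⊤ := by
        simp [ENNReal.add_ne_top, ENNReal.natCast_ne_top]
      calc ((N + 1 : ℕ) : ℝ≥0∞) * (ε / 2 / ((N : ℝ≥0∞) + 1))
          = (ε / 2 / ((N : ℝ≥0∞) + 1)) * ((N : ℝ≥0∞) + 1) := by
            push_cast; ring
        _ = ε / 2 := ENNReal.div_mul_cancel hb0 hbt
        _ ≤ ε / 2 := le_rfl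
    exact absurd (lt_of_lt_of_le hhead (hsum'.trans hcard)) (lt_irrefl _)
  exact Set.Finite.subset
    (Set.Finite.biUnion (Finset.range (N + 1)).finite_toSet fun n _ => hlevel n) hsub
end
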